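/- arXiv:1404.4478 — 5 statements merged into one kernel-verified Lean document; each statement's English description precedes it below -/
import Mathlib

section
/- For every even integer n ≥ 4, the rainbow connection number of the cycle C_n equals n/2. -/
open SimpleGraph Finset
open Fin.NatCast Fin.CommRing

/-- An edge colouring `c` makes `G` rainbow connected: every pair of vertices is joined
by a walk whose edges have pairwise distinct colours. -/
def IsRainbow {V : Type*} {α : Type*} (G : SimpleGraph V) (c : Sym2 V → α) : Prop :=
  ∀ u v : V, ∃ p : G.Walk u v, (p.edges.map c).Nodup

/-- `G` can be rainbow coloured using `k` colours. -/
def RainbowColorable {V : Type*} (G : SimpleGraph V) (k : ℕ) : Prop :=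
  ∃ c : Sym2 V → ℕ, (∀ e ∈ G.edgeSet, c e < k) ∧ IsRainbow G c

/-- The rainbow connection number of `G`. -/
noncomputable def rc {V : Type*} (G : SimpleGraph V) : ℕ :=
  sInf {k | RainbowColorable G k}

/-- A set of vertices is independent. -/
def IsIndepSet' {V : Type*} (G : SimpleGraph V) (s : Set V) : Prop :=
  ∀ u ∈ s, ∀ v ∈ s, ¬ G.Adj u v

private def cycColor (n m : ℕ) [NeZero n] : Sym2 (Fin n) → ℕ :=
  Sym2.lift ⟨fun a b =>
    if b = a + 1 then (if a = b + 1 then min a.val b.val % m else a.val % m)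
    else if a = b + 1 then b.val % m else 0, by
    intro a b
    dsimp only
    by_cases h1 : b = a + 1 <;> by_cases h2 : a = b + 1
    · rw [if_pos h1, if_pos h2, if_pos h2, if_pos h1, Nat.min_comm]
    · rw [if_pos h1, if_neg h2, if_neg h2, if_pos h1]
    · rw [if_neg h1, if_pos h2, if_pos h2, if_neg h1]
    · rw [if_neg h1, if_neg h2, if_neg h2, if_neg h1]⟩

private lemma cycColor_lt (n m : ℕ) [NeZero n] (hm : 0 < m) (e : Sym2 (Fin n)) :
    cycColor n m e < m := by
  induction e using Sym2.inductionOn with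
  | hf a b =>
    simp only [cycColor, Sym2.lift_mk]
    split_ifs <;> first | exact Nat.mod_lt _ hm | exact hm

private lemma cycColor_edge {n m : ℕ} (a : Fin (n+4)) :
    cycColor (n+4) m s(a, a+1) = a.val % m := by
  have h2 : ¬ (a = a + 1 + 1) := by
    rw [add_assoc, left_eq_add]
    intro h
    have h3 := congrArg Fin.val h
    rw [Fin.val_add_one] at h3
    by_cases hl : (1 : Fin (n+4)) = Fin.last (n+3)
    · have h4 := congrArg Fin.val hl
      simp [Fin.val_one, Fin.val_last] at h4
    · rw [if_neg hl, Fin.val_one] at h3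
      simp at h3
  simp [cycColor, h2]

private def walkFwd {n : ℕ} (u : Fin (n+4)) :
    (d : ℕ) → (cycleGraph (n+4)).Walk u (u + (d : Fin (n+4)))
  | 0 => SimpleGraph.Walk.nil.copy rfl (by simp)
  | d+1 => (SimpleGraph.Walk.cons (show (cycleGraph (n+4)).Adj u (u+1) by
      rw [SimpleGraph.cycleGraph_adj']
      right
      rw [add_sub_cancel_left, Fin.val_one])
      (walkFwd (u+1) d)).copy rfl (by push_cast; ring)

private lemma walkFwd_edges {n : ℕ} (u : Fin (n+4)) (d : ℕ) :
    (walkFwd u d).edges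
      = (List.range d).map (fun (i : ℕ) => s(u + (i : Fin (n+4)), u + (i : Fin (n+4)) + 1)) := by
  induction d generalizing u with
  | zero => simp [walkFwd]
  | succ d ih =>
    rw [walkFwd, SimpleGraph.Walk.edges_copy, SimpleGraph.Walk.edges_cons, ih,
      List.range_succ_eq_map, List.map_cons, List.map_map]
    congr 1
    · simp
    · refine List.map_congr_left (fun i _ => ?_)
      have h1 : u + 1 + (i : Fin (n+4)) = u + ((i + 1 : ℕ) : Fin (n+4)) := by push_cast; ring
      simp only [Function.comp_apply, Nat.succ_eq_add_one, h1]

private lemma walkFwd_colors {n m : ℕ} (u : Fin (n+4)) (d : ℕ) :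
    (walkFwd u d).edges.map (cycColor (n+4) m)
      = (List.range d).map (fun (i : ℕ) => (u + (i : Fin (n+4))).val % m) := by
  rw [walkFwd_edges, List.map_map]
  refine List.map_congr_left (fun i _ => ?_)
  simp only [Function.comp_apply, cycColor_edge]

private lemma colors_nodup {n m : ℕ} (hm : n + 4 = m + m) (u : Fin (n+4)) {d : ℕ} (hd : d ≤ m) :
    ((List.range d).map (fun (i : ℕ) => (u + (i : Fin (n+4))).val % m)).Nodup := by
  refine List.Nodup.map_on ?_ List.nodup_range
  intro i hi j hj hij
  rw [List.mem_range] at hi hj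
  have key : ∀ x : ℕ, x < n + 4 → (u + (x : Fin (n+4))).val % m = (u.val + x) % m := by
    intro x hx
    rw [Fin.val_add, Fin.val_cast_of_lt hx, Nat.mod_mod_of_dvd _ ⟨2, by omega⟩]
  rw [key i (by omega), key j (by omega)] at hij
  have h2 : i % m = j % m := Nat.ModEq.add_left_cancel' u.val hij
  rwa [Nat.mod_eq_of_lt (by omega), Nat.mod_eq_of_lt (by omega)] at h2

private lemma walk_length_ge {n : ℕ} {a b : Fin (n+4)} (p : (cycleGraph (n+4)).Walk a b) :
    min b.val (n + 4 - b.val) ≤ min a.val (n + 4 - a.val) + p.length := by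
  induction p with
  | nil => simp
  | @cons x y z h p ih =>
    have step : min y.val (n + 4 - y.val) ≤ min x.val (n + 4 - x.val) + 1 := by
      rw [SimpleGraph.cycleGraph_adj'] at h
      rcases h with h | h
      · have h1 : y = x - 1 := by
          have h2 : x - y = 1 := Fin.ext (by rw [h, Fin.val_one])
          rw [← h2]; ring
        have h3 := Fin.coe_sub_one x
        rw [← h1] at h3
        by_cases hx : x = 0
        · rw [if_pos hx] at h3
          have hx0 : x.val = 0 := by rw [hx]; rfl
          omega
        · rw [if_neg hx] at h3
          have := x.isLt
          omega
      · have h1 : y = x + 1 := by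
          have h2 : y - x = 1 := Fin.ext (by rw [h, Fin.val_one])
          rw [← h2]; ring
        have h3 := Fin.val_add_one x
        rw [← h1] at h3
        by_cases hx : x = Fin.last (n+3)
        · rw [if_pos hx] at h3
          have h4 : x.val = n + 3 := by rw [hx]; rfl
          omega
        · rw [if_neg hx] at h3
          have := y.isLt
          omega
    rw [SimpleGraph.Walk.length_cons]
    omega

/-- For every even `n ≥ 4`, the rainbow connection number of the cycle `Cₙ` is `n / 2`. -/
theorem stmt6 (n : ℕ) (hn : 4 ≤ n) (heven : Even n) : rc (cycleGraph n) = n / 2 := by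
  obtain ⟨k, rfl⟩ : ∃ k, n = k + 4 := ⟨n - 4, by omega⟩
  obtain ⟨m, hm⟩ := heven
  have hdiv : (k + 4) / 2 = m := by omega
  rw [hdiv]
  have hmem : RainbowColorable (cycleGraph (k+4)) m := by
    refine ⟨cycColor (k+4) m, fun e _ => cycColor_lt _ _ (by omega) e, ?_⟩
    have key : ∀ u v : Fin (k+4), (v - u).val ≤ m →
        ∃ p : (cycleGraph (k+4)).Walk u v, (p.edges.map (cycColor (k+4) m)).Nodup := by
      intro u v hle
      refine ⟨(walkFwd u (v - u).val).copy rfl (by rw [Fin.cast_val_eq_self]; ring), ?_⟩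
      rw [SimpleGraph.Walk.edges_copy, walkFwd_colors]
      exact colors_nodup hm u hle
    intro u v
    by_cases hle : (v - u).val ≤ m
    · exact key u v hle
    · have hne : v ≠ u := by rintro rfl; simp [sub_self] at hle
      have hsum : (v - u).val + (u - v).val = k + 4 := by
        have h1 : u - v = -(v - u) := by ring
        have h2 : (v - u) ≠ 0 := sub_ne_zero.mpr hne
        have h3 : (v - u).val ≠ 0 := by
          intro h; exact h2 (Fin.ext (by rw [h]; rfl))
        have h4 := (v - u).isLt
        rw [h1, Fin.coe_neg, Nat.mod_eq_of_lt (by omega)]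
        omega
      obtain ⟨p, hp⟩ := key v u (by omega)
      exact ⟨p.reverse, by
        rw [SimpleGraph.Walk.edges_reverse, List.map_reverse, List.nodup_reverse]; exact hp⟩
  refine le_antisymm (Nat.sInf_le hmem) (le_csInf ⟨m, hmem⟩ ?_)
  rintro b ⟨c, hcb, hrb⟩
  obtain ⟨p, hp⟩ := hrb 0 ((m : ℕ) : Fin (k+4))
  have hlen := walk_length_ge p
  have h0 : (0 : Fin (k+4)).val = 0 := rfl
  have hmval : ((m : ℕ) : Fin (k+4)).val = m := Fin.val_cast_of_lt (by omega)
  rw [h0, hmval] at hlen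
  have hsub : (p.edges.map c).toFinset ⊆ Finset.range b := by
    intro x hx
    rw [List.mem_toFinset] at hx
    obtain ⟨e, he, rfl⟩ := List.mem_map.mp hx
    exact Finset.mem_range.mpr (hcb e (p.edges_subset_edgeSet he))
  have hcard := Finset.card_le_card hsub
  rw [List.toFinset_card_of_nodup hp, Finset.card_range, List.length_map,
    SimpleGraph.Walk.length_edges] at hcard
  omega
end

section
/- Let G be a connected split graph with clique K of size at least 3 and pendant vertex set pen(G) of size p. If at least three distinct vertices of K each have a pendant neighbour, then rc(G) = p. -/
open SimpleGraph Finset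

namespace Stmt9Aux

open SimpleGraph
/-- colour of a clique edge from `xᵢ` to a non-triple clique vertex -/
def ka (i : ℕ) : ℕ := if i = 0 then 2 else 0

lemma ka_ne (i : ℕ) : ka i ≠ i := by unfold ka; split_ifs <;> omega
lemma ka_ne1 (i : ℕ) : ka i ≠ 1 := by unfold ka; split_ifs <;> omega
lemma ka_le (i : ℕ) : ka i ≤ 2 := by unfold ka; split_ifs <;> omega

variable {V : Type*} [Fintype V]

structure Ctx (V : Type*) [Fintype V] (G : SimpleGraph V) [DecidableRel G.Adj] where
  K : Set V
  hK : G.IsClique K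
  hI : ∀ u ∈ Kᶜ, ∀ v ∈ Kᶜ, ¬ G.Adj u v
  hconn : G.Connected
  x0 : V
  x1 : V
  x2 : V
  hx0 : x0 ∈ K
  hx1 : x1 ∈ K
  hx2 : x2 ∈ K
  h01 : x0 ≠ x1
  h02 : x0 ≠ x2
  h12 : x1 ≠ x2
  y0 : V
  y1 : V
  y2 : V
  hy0 : G.Adj x0 y0
  hy1 : G.Adj x1 y1
  hy2 : G.Adj x2 y2
  hd0 : G.degree y0 = 1
  hd1 : G.degree y1 = 1
  hd2 : G.degree y2 = 1
  A : V → V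
  hA : ∀ v, G.Adj v (A v)
  col : V → ℕ
  hcol0 : col y0 = 0
  hcol1 : col y1 = 1
  hcol2 : col y2 = 2
  hcolinj : Set.InjOn col {v | G.degree v = 1}
  hcolhi : ∀ v, G.degree v = 1 → v ≠ y0 → v ≠ y1 → v ≠ y2 → 3 ≤ col v
  hcollt : ∀ v, G.degree v = 1 → col v < Set.ncard {v : V | G.degree v = 1}

namespace Ctx

variable {G : SimpleGraph V} [DecidableRel G.Adj] (C : Ctx V G)

/-- is a triple vertex -/
def isT (v : V) : Prop := v = C.x0 ∨ v = C.x1 ∨ v = C.x2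

open Classical in
noncomputable def idx (v : V) : ℕ := if v = C.x0 then 0 else if v = C.x1 then 1 else 2

open Classical in
noncomputable def zc (v w : V) : ℕ :=
  if (G.Adj v C.x0 ∧ G.Adj v C.x1) ∨ (G.Adj v C.x0 ∧ G.Adj v C.x2) ∨
     (G.Adj v C.x1 ∧ G.Adj v C.x2) then 0
  else if G.Adj v C.x0 then 1
  else if G.Adj v C.x1 then 2
  else if G.Adj v C.x2 then 1
  else if w = C.A v then 1 else 2

open Classical in
noncomputable def cf (u v : V) : ℕ :=
  if G.degree u = 1 then (if G.degree v = 1 then 0 else C.col u)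
  else if G.degree v = 1 then C.col v
  else if C.isT u then
    (if C.isT v then 3 - (C.idx u + C.idx v) else if v ∈ C.K then ka (C.idx u) else C.idx u)
  else if C.isT v then (if u ∈ C.K then ka (C.idx v) else C.idx v)
  else if u ∈ C.K then (if v ∈ C.K then 0 else C.zc v u)
  else if v ∈ C.K then C.zc u v
  else 0

lemma cf_symm (u v : V) : C.cf u v = C.cf v u := by
  unfold cf; split_ifs <;> omega

noncomputable def c : Sym2 V → ℕ := Sym2.lift ⟨C.cf, C.cf_symm⟩

lemma c_mk (u v : V) : C.c s(u, v) = C.cf u v := rfl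

lemma csymm (u v : V) : C.c s(u, v) = C.c s(v, u) := by rw [Sym2.eq_swap]

lemma TK {v : V} (h : C.isT v) : v ∈ C.K := by
  rcases h with h | h | h <;> subst h
  exacts [C.hx0, C.hx1, C.hx2]

lemma isT0 : C.isT C.x0 := Or.inl rfl
lemma isT1 : C.isT C.x1 := Or.inr (Or.inl rfl)
lemma isT2 : C.isT C.x2 := Or.inr (Or.inr rfl)

lemma idx0 : C.idx C.x0 = 0 := by simp [idx]
lemma idx1 : C.idx C.x1 = 1 := by simp [idx, C.h01.symm]
lemma idx2 : C.idx C.x2 = 2 := by simp [idx, C.h02.symm, C.h12.symm]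

lemma idx_le (v : V) : C.idx v ≤ 2 := by unfold idx; split_ifs <;> omega

lemma idx_inj {u v : V} (hu : C.isT u) (hv : C.isT v) (hne : u ≠ v) :
    C.idx u ≠ C.idx v := by
  rcases hu with h | h | h <;> rcases hv with h' | h' | h' <;> subst h <;> subst h' <;>
    simp_all [idx0, idx1, idx2]

lemma zc_le (v w : V) : C.zc v w ≤ 2 := by unfold zc; split_ifs <;> omega

lemma notT {v : V} (h : v ∉ C.K) : ¬ C.isT v := fun ht => h (C.TK ht)

/-- every clique vertex has two neighbours. -/
lemma KnotPd {v : V} (hv : v ∈ C.K) : G.degree v ≠ 1 := by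
  intro hd
  have key : ∀ a b : V, a ∈ C.K → b ∈ C.K → a ≠ v → b ≠ v → a ≠ b → False := by
    intro a b ha hb hav hbv hab
    have h1 : G.Adj v a := C.hK hv ha (Ne.symm hav)
    have h2 : G.Adj v b := C.hK hv hb (Ne.symm hbv)
    have hcard : 1 < (G.neighborFinset v).card := by
      refine Finset.one_lt_card.mpr ⟨a, ?_, b, ?_, hab⟩ <;>
        simp [SimpleGraph.mem_neighborFinset, h1, h2]
    rw [← SimpleGraph.card_neighborFinset_eq_degree] at hd
    omega
  by_cases h0 : v = C.x0
  · exact key C.x1 C.x2 C.hx1 C.hx2 (h0 ▸ C.h01.symm) (h0 ▸ C.h02.symm) C.h12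
  · by_cases h1 : v = C.x1
    · exact key C.x0 C.x2 C.hx0 C.hx2 (fun h => h0 (h.symm ▸ h1.symm ▸ rfl)) (h1 ▸ C.h12.symm) C.h02
    · exact key C.x0 C.x1 C.hx0 C.hx1 (fun h => h0 h.symm) (fun h => h1 h.symm) C.h01

lemma PdnotK {v : V} (hd : G.degree v = 1) : v ∉ C.K := fun hv => C.KnotPd hv hd

lemma nbrK {v w : V} (hv : v ∉ C.K) (h : G.Adj v w) : w ∈ C.K := by
  by_contra hw
  exact C.hI v hv w hw h

lemma AK {v : V} (hv : v ∉ C.K) : C.A v ∈ C.K := C.nbrK hv (C.hA v)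

lemma uniq {v w : V} (hd : G.degree v = 1) (h : G.Adj v w) : w = C.A v := by
  rw [← SimpleGraph.card_neighborFinset_eq_degree] at hd
  obtain ⟨a, ha⟩ := Finset.card_eq_one.mp hd
  have hw : w ∈ G.neighborFinset v := by simpa [SimpleGraph.mem_neighborFinset] using h
  have hA : C.A v ∈ G.neighborFinset v := by
    simpa [SimpleGraph.mem_neighborFinset] using C.hA v
  rw [ha, Finset.mem_singleton] at hw hA
  rw [hw, hA]

lemma exists_second {v w0 : V} (hd : G.degree v ≠ 1) (h : G.Adj v w0) :
    ∃ w, G.Adj v w ∧ w ≠ w0 := by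
  by_contra hall
  push_neg at hall
  apply hd
  rw [← SimpleGraph.card_neighborFinset_eq_degree]
  have : G.neighborFinset v = {w0} := by
    ext a
    simp only [SimpleGraph.mem_neighborFinset, Finset.mem_singleton]
    exact ⟨fun ha => hall a ha, fun ha => ha ▸ h⟩
  rw [this, Finset.card_singleton]

lemma Ay0 : C.A C.y0 = C.x0 := (C.uniq C.hd0 C.hy0.symm).symm
lemma Ay1 : C.A C.y1 = C.x1 := (C.uniq C.hd1 C.hy1.symm).symm
lemma Ay2 : C.A C.y2 = C.x2 := (C.uniq C.hd2 C.hy2.symm).symm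

lemma y01 : C.y0 ≠ C.y1 := fun h => C.h01 (by rw [← C.Ay0, h, C.Ay1])
lemma y02 : C.y0 ≠ C.y2 := fun h => C.h02 (by rw [← C.Ay0, h, C.Ay2])
lemma y12 : C.y1 ≠ C.y2 := fun h => C.h12 (by rw [← C.Ay1, h, C.Ay2])

/-! ### colour computation lemmas -/

lemma cPend {u v : V} (hu : G.degree u = 1) (hv : G.degree v ≠ 1) :
    C.c s(u, v) = C.col u := by
  rw [c_mk]; unfold cf; simp [hu, hv]

lemma cTT {u v : V} (hu : C.isT u) (hv : C.isT v) :
    C.c s(u, v) = 3 - (C.idx u + C.idx v) := by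
  have h1 := C.KnotPd (C.TK hu)
  have h2 := C.KnotPd (C.TK hv)
  rw [c_mk]; unfold cf; simp [hu, hv, h1, h2]

lemma cTK {u v : V} (hu : C.isT u) (hvK : v ∈ C.K) (hv : ¬ C.isT v) :
    C.c s(u, v) = ka (C.idx u) := by
  have h1 := C.KnotPd (C.TK hu)
  have h2 := C.KnotPd hvK
  rw [c_mk]; unfold cf; simp [hu, hv, h1, h2, hvK]

lemma cTN {u v : V} (hu : C.isT u) (hvK : v ∉ C.K) (hv : G.degree v ≠ 1) :
    C.c s(u, v) = C.idx u := by
  have h1 := C.KnotPd (C.TK hu)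
  have h2 := C.notT hvK
  rw [c_mk]; unfold cf; simp [hu, hv, h1, h2, hvK]

lemma cKK {u v : V} (hu : u ∈ C.K) (hu' : ¬ C.isT u) (hv : v ∈ C.K) (hv' : ¬ C.isT v) :
    C.c s(u, v) = 0 := by
  have h1 := C.KnotPd hu
  have h2 := C.KnotPd hv
  rw [c_mk]; unfold cf; simp [hu, hv, h1, h2, hu', hv']

lemma cKN {u v : V} (hu : u ∈ C.K) (hu' : ¬ C.isT u) (hv : v ∉ C.K) (hv' : G.degree v ≠ 1) :
    C.c s(u, v) = C.zc v u := by
  have h1 := C.KnotPd hu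
  have h2 := C.notT hv
  rw [c_mk]; unfold cf; simp [hu, hv, h1, h2, hu', hv']

lemma zc0 {v : V} (h0 : G.Adj v C.x0) (h1 : ¬ G.Adj v C.x1) (h2 : ¬ G.Adj v C.x2) (w : V) :
    C.zc v w = 1 := by unfold zc; simp [h0, h1, h2]

lemma zc1 {v : V} (h0 : ¬ G.Adj v C.x0) (h1 : G.Adj v C.x1) (h2 : ¬ G.Adj v C.x2) (w : V) :
    C.zc v w = 2 := by unfold zc; simp [h0, h1, h2]

lemma zc2 {v : V} (h0 : ¬ G.Adj v C.x0) (h1 : ¬ G.Adj v C.x1) (h2 : G.Adj v C.x2) (w : V) :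
    C.zc v w = 1 := by unfold zc; simp [h0, h1, h2]

lemma zcA {v : V} (h0 : ¬ G.Adj v C.x0) (h1 : ¬ G.Adj v C.x1) (h2 : ¬ G.Adj v C.x2) :
    C.zc v (C.A v) = 1 := by unfold zc; simp [h0, h1, h2]

lemma zcB {v w : V} (h0 : ¬ G.Adj v C.x0) (h1 : ¬ G.Adj v C.x1) (h2 : ¬ G.Adj v C.x2)
    (hw : w ≠ C.A v) : C.zc v w = 2 := by unfold zc; simp [h0, h1, h2, hw]

lemma c_lt3 {u v : V} (hne : u ≠ v) (hu : G.degree u ≠ 1) (hv : G.degree v ≠ 1) :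
    C.c s(u, v) < 3 := by
  have hka := ka_le
  have hidx := C.idx_le
  have hzc := C.zc_le
  rw [c_mk]; unfold cf
  split_ifs with p1 p2 p3 p4 p5 p6 p7 p8 <;>
    first
    | omega
    | (have h9 := C.idx_inj ‹C.isT u› ‹C.isT v› hne
       have h10 := C.idx_le u; have h11 := C.idx_le v; omega)
    | (exact lt_of_le_of_lt (Nat.sub_le _ _) (by omega))
    | (have := hka (C.idx u); omega)
    | (have := hka (C.idx v); omega)
    | (have := hidx u; omega)
    | (have := hidx v; omega)
    | (have := hzc v u; omega)
    | (have := hzc u v; omega)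

/-- entering a triple vertex `t` from inside the clique avoids colour `idx t`. -/
lemma cK_into {u t : V} (hu : u ∈ C.K) (ht : C.isT t) (hne : u ≠ t) :
    C.c s(u, t) ≠ C.idx t ∧ C.c s(u, t) < 3 := by
  by_cases hT : C.isT u
  · rw [C.csymm, C.cTT ht hT]
    have h1 := C.idx_inj hT ht hne
    have h2 := C.idx_le u
    have h3 := C.idx_le t
    constructor <;> omega
  · rw [C.csymm, C.cTK ht hu hT]
    have h1 := ka_ne (C.idx t)
    have h2 := ka_le (C.idx t)
    constructor <;> omega

/-! ### walk builders -/

lemma w1 {u v : V} (h : G.Adj u v) : ∃ p : G.Walk u v, (p.edges.map C.c).Nodup :=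
  ⟨Walk.cons h Walk.nil, by simp⟩

lemma w2 {u a v : V} (h1 : G.Adj u a) (h2 : G.Adj a v)
    (hc : C.c s(u, a) ≠ C.c s(a, v)) : ∃ p : G.Walk u v, (p.edges.map C.c).Nodup :=
  ⟨Walk.cons h1 (Walk.cons h2 Walk.nil), by simp [hc]⟩

lemma w3 {u a b v : V} (h1 : G.Adj u a) (h2 : G.Adj a b) (h3 : G.Adj b v)
    (hc1 : C.c s(u, a) ≠ C.c s(a, b)) (hc2 : C.c s(u, a) ≠ C.c s(b, v))
    (hc3 : C.c s(a, b) ≠ C.c s(b, v)) : ∃ p : G.Walk u v, (p.edges.map C.c).Nodup :=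
  ⟨Walk.cons h1 (Walk.cons h2 (Walk.cons h3 Walk.nil)), by simp [hc1, hc2, hc3]⟩

lemma rev {u v : V} (h : ∃ p : G.Walk u v, (p.edges.map C.c).Nodup) :
    ∃ p : G.Walk v u, (p.edges.map C.c).Nodup := by
  obtain ⟨p, hp⟩ := h
  exact ⟨p.reverse, by simpa [SimpleGraph.Walk.edges_reverse, List.map_reverse] using hp⟩


/-! ### route lemmas -/

lemma caseKP {u v : V} (hu : u ∈ C.K) (hv : G.degree v = 1) (hadj : ¬ G.Adj u v) :
    ∃ p : G.Walk u v, (p.edges.map C.c).Nodup := by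
  have hvK : v ∉ C.K := C.PdnotK hv
  have hvn : G.Adj v (C.A v) := C.hA v
  have hnK : C.A v ∈ C.K := C.AK hvK
  have hun : u ≠ C.A v := fun h => hadj (h ▸ hvn.symm)
  have h1 : G.Adj u (C.A v) := C.hK hu hnK hun
  refine C.w2 h1 hvn.symm ?_
  have e3 : C.c s(C.A v, v) = C.col v := by
    rw [C.csymm]; exact C.cPend hv (C.KnotPd hnK)
  rw [e3]
  by_cases h0 : v = C.y0
  · subst h0; rw [C.Ay0] at hun ⊢; rw [C.hcol0]
    have := C.cK_into hu C.isT0 hun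
    rw [C.idx0] at this; exact this.1
  by_cases h1' : v = C.y1
  · subst h1'; rw [C.Ay1] at hun ⊢; rw [C.hcol1]
    have := C.cK_into hu C.isT1 hun
    rw [C.idx1] at this; exact this.1
  by_cases h2 : v = C.y2
  · subst h2; rw [C.Ay2] at hun ⊢; rw [C.hcol2]
    have := C.cK_into hu C.isT2 hun
    rw [C.idx2] at this; exact this.1
  · have h3 : 3 ≤ C.col v := C.hcolhi v hv h0 h1' h2
    have hlt := C.c_lt3 hun (C.KnotPd hu) (C.KnotPd hnK)
    omega

lemma caseKN {u v : V} (hu : u ∈ C.K) (hvK : v ∉ C.K) (hvP : G.degree v ≠ 1)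
    (hadj : ¬ G.Adj u v) : ∃ p : G.Walk u v, (p.edges.map C.c).Nodup := by
  by_cases hS : G.Adj v C.x0 ∨ G.Adj v C.x1 ∨ G.Adj v C.x2
  · have key : ∀ t, C.isT t → G.Adj v t → ∃ p : G.Walk u v, (p.edges.map C.c).Nodup := by
      intro t ht hvt
      have hut : u ≠ t := fun h => hadj (h ▸ hvt.symm)
      refine C.w2 (C.hK hu (C.TK ht) hut) hvt.symm ?_
      rw [C.cTN ht hvK hvP]
      exact (C.cK_into hu ht hut).1
    rcases hS with h | h | h
    exacts [key _ C.isT0 h, key _ C.isT1 h, key _ C.isT2 h]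
  · push_neg at hS; obtain ⟨k0, k1, k2⟩ := hS
    have hz : G.Adj v (C.A v) := C.hA v
    have hzK : C.A v ∈ C.K := C.AK hvK
    have hzT : ¬ C.isT (C.A v) := by
      rintro (h | h | h) <;> rw [h] at hz
      exacts [k0 hz, k1 hz, k2 hz]
    have huz : u ≠ C.A v := fun h => hadj (h ▸ hz.symm)
    refine C.w2 (C.hK hu hzK huz) hz.symm ?_
    have e2 : C.c s(C.A v, v) = 1 := by rw [C.cKN hzK hzT hvK hvP, C.zcA k0 k1 k2]
    rw [e2]
    by_cases hT : C.isT u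
    · rw [C.cTK hT hzK hzT]; exact ka_ne1 _
    · rw [C.cKK hu hT hzK hzT]; omega

lemma mid_ne {u w : V} (hu : G.degree u = 1) (hwK : w ∈ C.K) (hwne : C.A u ≠ w) :
    C.c s(C.A u, w) ≠ C.col u := by
  have huK := C.PdnotK hu
  have hAuK := C.AK huK
  by_cases h0 : u = C.y0
  · subst h0; rw [C.Ay0] at hwne ⊢; rw [C.hcol0, C.csymm]
    have := C.cK_into hwK C.isT0 (Ne.symm hwne)
    rw [C.idx0] at this; exact this.1
  by_cases h1 : u = C.y1
  · subst h1; rw [C.Ay1] at hwne ⊢; rw [C.hcol1, C.csymm]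
    have := C.cK_into hwK C.isT1 (Ne.symm hwne)
    rw [C.idx1] at this; exact this.1
  by_cases h2 : u = C.y2
  · subst h2; rw [C.Ay2] at hwne ⊢; rw [C.hcol2, C.csymm]
    have := C.cK_into hwK C.isT2 (Ne.symm hwne)
    rw [C.idx2] at this; exact this.1
  · have h3 : 3 ≤ C.col u := C.hcolhi u hu h0 h1 h2
    have hlt := C.c_lt3 hwne (C.KnotPd hAuK) (C.KnotPd hwK)
    omega

lemma casePP {u v : V} (hu : G.degree u = 1) (hv : G.degree v = 1) (hne : u ≠ v) :
    ∃ p : G.Walk u v, (p.edges.map C.c).Nodup := by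
  have hcc : C.col u ≠ C.col v := fun h => hne (C.hcolinj hu hv h)
  have huK := C.PdnotK hu
  have hvK := C.PdnotK hv
  have e1 : C.c s(u, C.A u) = C.col u := C.cPend hu (C.KnotPd (C.AK huK))
  by_cases hnn : C.A u = C.A v
  · have h2 : G.Adj (C.A u) v := by rw [hnn]; exact (C.hA v).symm
    refine C.w2 (C.hA u) h2 ?_
    rw [e1, C.csymm, C.cPend hv (C.KnotPd (C.AK huK))]
    exact hcc
  · have e3 : C.c s(C.A v, v) = C.col v := by
      rw [C.csymm]; exact C.cPend hv (C.KnotPd (C.AK hvK))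
    have e2a : C.c s(C.A u, C.A v) ≠ C.col u := C.mid_ne hu (C.AK hvK) hnn
    have e2b : C.c s(C.A u, C.A v) ≠ C.col v := by
      rw [C.csymm]; exact C.mid_ne hv (C.AK huK) (Ne.symm hnn)
    refine C.w3 (C.hA u) (C.hK (C.AK huK) (C.AK hvK) hnn) (C.hA v).symm ?_ ?_ ?_
    · rw [e1]; exact Ne.symm e2a
    · rw [e1, e3]; exact hcc
    · rw [e3]; exact e2b


lemma caseNP {u v : V} (huK : u ∉ C.K) (huP : G.degree u ≠ 1) (hvP : G.degree v = 1) :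
    ∃ p : G.Walk u v, (p.edges.map C.c).Nodup := by
  have hvK : v ∉ C.K := C.PdnotK hvP
  have hnvK : C.A v ∈ C.K := C.AK hvK
  by_cases h0 : v = C.y0
  · subst h0
    have e3 : C.c s(C.x0, C.y0) = 0 := by
      rw [C.csymm, C.cPend C.hd0 (C.KnotPd C.hx0), C.hcol0]
    by_cases a1 : G.Adj u C.x1
    · have e1 : C.c s(u, C.x1) = 1 := by rw [C.csymm, C.cTN C.isT1 huK huP, C.idx1] <;> decide
      have e2 : C.c s(C.x1, C.x0) = 2 := by rw [C.cTT C.isT1 C.isT0, C.idx1, C.idx0] <;> decide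
      refine C.w3 a1 (C.hK C.hx1 C.hx0 C.h01.symm) C.hy0 ?_ ?_ ?_ <;>
        simp only [e1, e2, e3] <;> omega
    by_cases a2 : G.Adj u C.x2
    · have e1 : C.c s(u, C.x2) = 2 := by rw [C.csymm, C.cTN C.isT2 huK huP, C.idx2] <;> decide
      have e2 : C.c s(C.x2, C.x0) = 1 := by rw [C.cTT C.isT2 C.isT0, C.idx2, C.idx0] <;> decide
      refine C.w3 a2 (C.hK C.hx2 C.hx0 C.h02.symm) C.hy0 ?_ ?_ ?_ <;>
        simp only [e1, e2, e3] <;> omega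
    by_cases a0 : G.Adj u C.x0
    · obtain ⟨w, hw, hwx⟩ := exists_second huP a0
      have hwK : w ∈ C.K := C.nbrK huK hw
      have hwT : ¬ C.isT w := by
        rintro (h | h | h) <;> rw [h] at hw
        exacts [hwx h, a1 hw, a2 hw]
      have e1 : C.c s(u, w) = 1 := by
        rw [C.csymm, C.cKN hwK hwT huK huP, C.zc0 a0 a1 a2]
      have e2 : C.c s(w, C.x0) = 2 := by
        rw [C.csymm, C.cTK C.isT0 hwK hwT, C.idx0] <;> decide
      refine C.w3 hw (C.hK hwK C.hx0 hwx) C.hy0 ?_ ?_ ?_ <;>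
        simp only [e1, e2, e3] <;> omega
    · have hzK : C.A u ∈ C.K := C.AK huK
      have hz : G.Adj u (C.A u) := C.hA u
      have hzT : ¬ C.isT (C.A u) := by
        rintro (h | h | h) <;> rw [h] at hz
        exacts [a0 hz, a1 hz, a2 hz]
      have hzx : C.A u ≠ C.x0 := fun h => a0 (h ▸ hz)
      have e1 : C.c s(u, C.A u) = 1 := by
        rw [C.csymm, C.cKN hzK hzT huK huP, C.zcA a0 a1 a2]
      have e2 : C.c s(C.A u, C.x0) = 2 := by
        rw [C.csymm, C.cTK C.isT0 hzK hzT, C.idx0] <;> decide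
      refine C.w3 hz (C.hK hzK C.hx0 hzx) C.hy0 ?_ ?_ ?_ <;>
        simp only [e1, e2, e3] <;> omega
  by_cases h1 : v = C.y1
  · subst h1
    have e3 : C.c s(C.x1, C.y1) = 1 := by
      rw [C.csymm, C.cPend C.hd1 (C.KnotPd C.hx1), C.hcol1]
    by_cases a0 : G.Adj u C.x0
    · have e1 : C.c s(u, C.x0) = 0 := by rw [C.csymm, C.cTN C.isT0 huK huP, C.idx0] <;> decide
      have e2 : C.c s(C.x0, C.x1) = 2 := by rw [C.cTT C.isT0 C.isT1, C.idx0, C.idx1] <;> decide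
      refine C.w3 a0 (C.hK C.hx0 C.hx1 C.h01) C.hy1 ?_ ?_ ?_ <;>
        simp only [e1, e2, e3] <;> omega
    by_cases a2 : G.Adj u C.x2
    · have e1 : C.c s(u, C.x2) = 2 := by rw [C.csymm, C.cTN C.isT2 huK huP, C.idx2] <;> decide
      have e2 : C.c s(C.x2, C.x1) = 0 := by rw [C.cTT C.isT2 C.isT1, C.idx2, C.idx1] <;> decide
      refine C.w3 a2 (C.hK C.hx2 C.hx1 C.h12.symm) C.hy1 ?_ ?_ ?_ <;>
        simp only [e1, e2, e3] <;> omega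
    by_cases a1 : G.Adj u C.x1
    · obtain ⟨w, hw, hwx⟩ := exists_second huP a1
      have hwK : w ∈ C.K := C.nbrK huK hw
      have hwT : ¬ C.isT w := by
        rintro (h | h | h) <;> rw [h] at hw
        exacts [a0 hw, hwx h, a2 hw]
      have e1 : C.c s(u, w) = 2 := by
        rw [C.csymm, C.cKN hwK hwT huK huP, C.zc1 a0 a1 a2]
      have e2 : C.c s(w, C.x1) = 0 := by
        rw [C.csymm, C.cTK C.isT1 hwK hwT, C.idx1] <;> decide
      refine C.w3 hw (C.hK hwK C.hx1 hwx) C.hy1 ?_ ?_ ?_ <;>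
        simp only [e1, e2, e3] <;> omega
    · obtain ⟨z, hz, hzA⟩ := exists_second huP (C.hA u)
      have hzK : z ∈ C.K := C.nbrK huK hz
      have hzT : ¬ C.isT z := by
        rintro (h | h | h) <;> rw [h] at hz
        exacts [a0 hz, a1 hz, a2 hz]
      have hzx : z ≠ C.x1 := fun h => a1 (h ▸ hz)
      have e1 : C.c s(u, z) = 2 := by
        rw [C.csymm, C.cKN hzK hzT huK huP, C.zcB a0 a1 a2 hzA]
      have e2 : C.c s(z, C.x1) = 0 := by
        rw [C.csymm, C.cTK C.isT1 hzK hzT, C.idx1] <;> decide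
      refine C.w3 hz (C.hK hzK C.hx1 hzx) C.hy1 ?_ ?_ ?_ <;>
        simp only [e1, e2, e3] <;> omega
  by_cases h2 : v = C.y2
  · subst h2
    have e3 : C.c s(C.x2, C.y2) = 2 := by
      rw [C.csymm, C.cPend C.hd2 (C.KnotPd C.hx2), C.hcol2]
    by_cases a0 : G.Adj u C.x0
    · have e1 : C.c s(u, C.x0) = 0 := by rw [C.csymm, C.cTN C.isT0 huK huP, C.idx0] <;> decide
      have e2 : C.c s(C.x0, C.x2) = 1 := by rw [C.cTT C.isT0 C.isT2, C.idx0, C.idx2] <;> decide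
      refine C.w3 a0 (C.hK C.hx0 C.hx2 C.h02) C.hy2 ?_ ?_ ?_ <;>
        simp only [e1, e2, e3] <;> omega
    by_cases a1 : G.Adj u C.x1
    · have e1 : C.c s(u, C.x1) = 1 := by rw [C.csymm, C.cTN C.isT1 huK huP, C.idx1] <;> decide
      have e2 : C.c s(C.x1, C.x2) = 0 := by rw [C.cTT C.isT1 C.isT2, C.idx1, C.idx2] <;> decide
      refine C.w3 a1 (C.hK C.hx1 C.hx2 C.h12) C.hy2 ?_ ?_ ?_ <;>
        simp only [e1, e2, e3] <;> omega
    by_cases a2 : G.Adj u C.x2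
    · obtain ⟨w, hw, hwx⟩ := exists_second huP a2
      have hwK : w ∈ C.K := C.nbrK huK hw
      have hwT : ¬ C.isT w := by
        rintro (h | h | h) <;> rw [h] at hw
        exacts [a0 hw, a1 hw, hwx h]
      have e1 : C.c s(u, w) = 1 := by
        rw [C.csymm, C.cKN hwK hwT huK huP, C.zc2 a0 a1 a2]
      have e2 : C.c s(w, C.x2) = 0 := by
        rw [C.csymm, C.cTK C.isT2 hwK hwT, C.idx2] <;> decide
      refine C.w3 hw (C.hK hwK C.hx2 hwx) C.hy2 ?_ ?_ ?_ <;>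
        simp only [e1, e2, e3] <;> omega
    · have hzK : C.A u ∈ C.K := C.AK huK
      have hz : G.Adj u (C.A u) := C.hA u
      have hzT : ¬ C.isT (C.A u) := by
        rintro (h | h | h) <;> rw [h] at hz
        exacts [a0 hz, a1 hz, a2 hz]
      have hzx : C.A u ≠ C.x2 := fun h => a2 (h ▸ hz)
      have e1 : C.c s(u, C.A u) = 1 := by
        rw [C.csymm, C.cKN hzK hzT huK huP, C.zcA a0 a1 a2]
      have e2 : C.c s(C.A u, C.x2) = 0 := by
        rw [C.csymm, C.cTK C.isT2 hzK hzT, C.idx2] <;> decide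
      refine C.w3 hz (C.hK hzK C.hx2 hzx) C.hy2 ?_ ?_ ?_ <;>
        simp only [e1, e2, e3] <;> omega
  · -- generic pendant with high colour
    have hm3 : 3 ≤ C.col v := C.hcolhi v hvP h0 h1 h2
    have e3 : C.c s(C.A v, v) = C.col v := by
      rw [C.csymm]; exact C.cPend hvP (C.KnotPd hnvK)
    by_cases hadj : G.Adj u (C.A v)
    · refine C.w2 hadj (C.hA v).symm ?_
      rw [e3]
      have hne : u ≠ C.A v := fun h => huK (h ▸ hnvK)
      have := C.c_lt3 hne huP (C.KnotPd hnvK)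
      omega
    · by_cases hxj : (G.Adj u C.x0 ∧ C.x0 ≠ C.A v) ∨ (G.Adj u C.x1 ∧ C.x1 ≠ C.A v) ∨
          (G.Adj u C.x2 ∧ C.x2 ≠ C.A v)
      · have key : ∀ t, C.isT t → G.Adj u t → t ≠ C.A v →
            ∃ p : G.Walk u v, (p.edges.map C.c).Nodup := by
          intro t ht hut htn
          refine C.w3 hut (C.hK (C.TK ht) hnvK htn) (C.hA v).symm ?_ ?_ ?_
          · rw [C.csymm u, C.cTN ht huK huP, C.csymm t]
            exact Ne.symm (C.cK_into hnvK ht (Ne.symm htn)).1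
          · rw [C.csymm u, C.cTN ht huK huP, e3]
            have := C.idx_le t
            omega
          · rw [C.csymm t, e3]
            have := (C.cK_into hnvK ht (Ne.symm htn)).2
            omega
        rcases hxj with ⟨h, h'⟩ | ⟨h, h'⟩ | ⟨h, h'⟩
        exacts [key _ C.isT0 h h', key _ C.isT1 h h', key _ C.isT2 h h']
      · push_neg at hxj
        have a0 : ¬ G.Adj u C.x0 := fun h => hadj ((hxj.1 h) ▸ h)
        have a1 : ¬ G.Adj u C.x1 := fun h => hadj ((hxj.2.1 h) ▸ h)
        have a2 : ¬ G.Adj u C.x2 := fun h => hadj ((hxj.2.2 h) ▸ h)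
        have hzK : C.A u ∈ C.K := C.AK huK
        have hz : G.Adj u (C.A u) := C.hA u
        have hzT : ¬ C.isT (C.A u) := by
          rintro (h | h | h) <;> rw [h] at hz
          exacts [a0 hz, a1 hz, a2 hz]
        have hzn : C.A u ≠ C.A v := fun h => hadj (h ▸ hz)
        have e1 : C.c s(u, C.A u) = 1 := by
          rw [C.csymm, C.cKN hzK hzT huK huP, C.zcA a0 a1 a2]
        have e2 : C.c s(C.A u, C.A v) ≠ 1 ∧ C.c s(C.A u, C.A v) < 3 := by
          by_cases hT : C.isT (C.A v)
          · rw [C.csymm, C.cTK hT hzK hzT]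
            exact ⟨ka_ne1 _, by have := ka_le (C.idx (C.A v)); omega⟩
          · rw [C.cKK hzK hzT hnvK hT]; omega
        refine C.w3 hz (C.hK hzK hnvK hzn) (C.hA v).symm ?_ ?_ ?_
        · rw [e1]; exact Ne.symm e2.1
        · rw [e1, e3]; omega
        · rw [e3]
          have := e2.2
          omega


lemma caseEA {u v t t' : V} (huK : u ∉ C.K) (hvK : v ∉ C.K) (huP : G.degree u ≠ 1)
    (hvP : G.degree v ≠ 1) (ht : C.isT t) (ht' : C.isT t') (htt : t ≠ t')
    (h1 : G.Adj u t) (h2 : G.Adj v t') : ∃ p : G.Walk u v, (p.edges.map C.c).Nodup := by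
  have e1 : C.c s(u, t) = C.idx t := by rw [C.csymm, C.cTN ht huK huP]
  have e2 : C.c s(t, t') = 3 - (C.idx t + C.idx t') := C.cTT ht ht'
  have e3 : C.c s(t', v) = C.idx t' := C.cTN ht' hvK hvP
  have hne := C.idx_inj ht ht' htt
  have l1 := C.idx_le t
  have l2 := C.idx_le t'
  refine C.w3 h1 (C.hK (C.TK ht) (C.TK ht') htt) h2.symm ?_ ?_ ?_ <;>
    simp only [e1, e2, e3] <;> omega

lemma caseEB {u v : V} (huK : u ∉ C.K) (hvK : v ∉ C.K) (huP : G.degree u ≠ 1)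
    (hvP : G.degree v ≠ 1) (k0 : ¬ G.Adj v C.x0) (k1 : ¬ G.Adj v C.x1) (k2 : ¬ G.Adj v C.x2)
    (hSu : G.Adj u C.x0 ∨ G.Adj u C.x1 ∨ G.Adj u C.x2) :
    ∃ p : G.Walk u v, (p.edges.map C.c).Nodup := by
  have hAvK : C.A v ∈ C.K := C.AK hvK
  have hAv : G.Adj v (C.A v) := C.hA v
  have hAvT : ¬ C.isT (C.A v) := by
    rintro (h | h | h) <;> rw [h] at hAv
    exacts [k0 hAv, k1 hAv, k2 hAv]
  rcases hSu with h | h | h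
  · have hxz : C.x0 ≠ C.A v := fun he => hAvT (he ▸ C.isT0)
    have e1 : C.c s(u, C.x0) = 0 := by rw [C.csymm, C.cTN C.isT0 huK huP, C.idx0]
    have e2 : C.c s(C.x0, C.A v) = 2 := by rw [C.cTK C.isT0 hAvK hAvT, C.idx0] <;> decide
    have e3 : C.c s(C.A v, v) = 1 := by rw [C.cKN hAvK hAvT hvK hvP, C.zcA k0 k1 k2]
    refine C.w3 h (C.hK C.hx0 hAvK hxz) hAv.symm ?_ ?_ ?_ <;>
      simp only [e1, e2, e3] <;> omega
  · obtain ⟨z, hz, hzA⟩ := exists_second hvP (C.hA v)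
    have hzK : z ∈ C.K := C.nbrK hvK hz
    have hzT : ¬ C.isT z := by
      rintro (hh | hh | hh)
      exacts [k0 (hh ▸ hz), k1 (hh ▸ hz), k2 (hh ▸ hz)]
    have hxz : C.x1 ≠ z := fun he => hzT (he ▸ C.isT1)
    have e1 : C.c s(u, C.x1) = 1 := by rw [C.csymm, C.cTN C.isT1 huK huP, C.idx1]
    have e2 : C.c s(C.x1, z) = 0 := by rw [C.cTK C.isT1 hzK hzT, C.idx1] <;> decide
    have e3 : C.c s(z, v) = 2 := by rw [C.cKN hzK hzT hvK hvP, C.zcB k0 k1 k2 hzA]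
    refine C.w3 h (C.hK C.hx1 hzK hxz) hz.symm ?_ ?_ ?_ <;>
      simp only [e1, e2, e3] <;> omega
  · have hxz : C.x2 ≠ C.A v := fun he => hAvT (he ▸ C.isT2)
    have e1 : C.c s(u, C.x2) = 2 := by rw [C.csymm, C.cTN C.isT2 huK huP, C.idx2]
    have e2 : C.c s(C.x2, C.A v) = 0 := by rw [C.cTK C.isT2 hAvK hAvT, C.idx2] <;> decide
    have e3 : C.c s(C.A v, v) = 1 := by rw [C.cKN hAvK hAvT hvK hvP, C.zcA k0 k1 k2]
    refine C.w3 h (C.hK C.hx2 hAvK hxz) hAv.symm ?_ ?_ ?_ <;>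
      simp only [e1, e2, e3] <;> omega

lemma caseE3 {u v : V} (huK : u ∉ C.K) (hvK : v ∉ C.K) (huP : G.degree u ≠ 1)
    (hvP : G.degree v ≠ 1) (j0 : ¬ G.Adj u C.x0) (j1 : ¬ G.Adj u C.x1) (j2 : ¬ G.Adj u C.x2)
    (k0 : ¬ G.Adj v C.x0) (k1 : ¬ G.Adj v C.x1) (k2 : ¬ G.Adj v C.x2) :
    ∃ p : G.Walk u v, (p.edges.map C.c).Nodup := by
  have hAuK : C.A u ∈ C.K := C.AK huK
  have hAu : G.Adj u (C.A u) := C.hA u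
  have hAuT : ¬ C.isT (C.A u) := by
    rintro (h | h | h) <;> rw [h] at hAu
    exacts [j0 hAu, j1 hAu, j2 hAu]
  have e1 : C.c s(u, C.A u) = 1 := by
    rw [C.csymm, C.cKN hAuK hAuT huK huP, C.zcA j0 j1 j2]
  by_cases hw : ∃ w, G.Adj v w ∧ w ≠ C.A v ∧ w ≠ C.A u
  · obtain ⟨w, hvw, hwAv, hwAu⟩ := hw
    have hwK : w ∈ C.K := C.nbrK hvK hvw
    have hwT : ¬ C.isT w := by
      rintro (h | h | h)
      exacts [k0 (h ▸ hvw), k1 (h ▸ hvw), k2 (h ▸ hvw)]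
    have e2 : C.c s(C.A u, w) = 0 := C.cKK hAuK hAuT hwK hwT
    have e3 : C.c s(w, v) = 2 := by
      rw [C.cKN hwK hwT hvK hvP, C.zcB k0 k1 k2 hwAv]
    refine C.w3 hAu (C.hK hAuK hwK (Ne.symm hwAu)) hvw.symm ?_ ?_ ?_ <;>
      simp only [e1, e2, e3] <;> omega
  · push_neg at hw
    obtain ⟨w2, hw2, hw2A⟩ := exists_second hvP (C.hA v)
    have hkey := hw w2 hw2 hw2A
    have hvAu : G.Adj v (C.A u) := hkey ▸ hw2
    have hAA : C.A u ≠ C.A v := hkey ▸ hw2A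
    have e2 : C.c s(C.A u, v) = 2 := by
      rw [C.cKN hAuK hAuT hvK hvP, C.zcB k0 k1 k2 hAA]
    refine C.w2 hAu hvAu.symm ?_
    rw [e1, e2]; omega

lemma caseNN {u v : V} (huK : u ∉ C.K) (hvK : v ∉ C.K) (huP : G.degree u ≠ 1)
    (hvP : G.degree v ≠ 1) : ∃ p : G.Walk u v, (p.edges.map C.c).Nodup := by
  by_cases hSu : G.Adj u C.x0 ∨ G.Adj u C.x1 ∨ G.Adj u C.x2
  · by_cases hSv : G.Adj v C.x0 ∨ G.Adj v C.x1 ∨ G.Adj v C.x2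
    · have diag : ∀ t, C.isT t → G.Adj u t → G.Adj v t →
          (¬ G.Adj v C.x0 → ¬ G.Adj v C.x1 → ¬ G.Adj v C.x2 → False) →
          (∀ t', C.isT t' → t' ≠ t → G.Adj v t' →
            ∃ p : G.Walk u v, (p.edges.map C.c).Nodup) →
          True := fun _ _ _ _ _ _ => trivial
      clear diag
      rcases hSu with h | h | h <;> rcases hSv with g | g | g
      · -- both adjacent to x0
        by_cases b1 : G.Adj v C.x1
        · exact C.caseEA huK hvK huP hvP C.isT0 C.isT1 C.h01 h b1
        by_cases b2 : G.Adj v C.x2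
        · exact C.caseEA huK hvK huP hvP C.isT0 C.isT2 C.h02 h b2
        · obtain ⟨w, hvw, hwx⟩ := exists_second hvP g
          have hwK : w ∈ C.K := C.nbrK hvK hvw
          have hwT : ¬ C.isT w := by
            rintro (hh | hh | hh)
            exacts [hwx hh, b1 (hh ▸ hvw), b2 (hh ▸ hvw)]
          have e1 : C.c s(u, C.x0) = 0 := by rw [C.csymm, C.cTN C.isT0 huK huP, C.idx0]
          have e2 : C.c s(C.x0, w) = 2 := by rw [C.cTK C.isT0 hwK hwT, C.idx0] <;> decide
          have e3 : C.c s(w, v) = 1 := by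
            rw [C.cKN hwK hwT hvK hvP, C.zc0 g b1 b2]
          refine C.w3 h (C.hK C.hx0 hwK (Ne.symm hwx)) hvw.symm ?_ ?_ ?_ <;>
            simp only [e1, e2, e3] <;> omega
      · exact C.caseEA huK hvK huP hvP C.isT0 C.isT1 C.h01 h g
      · exact C.caseEA huK hvK huP hvP C.isT0 C.isT2 C.h02 h g
      · exact C.caseEA huK hvK huP hvP C.isT1 C.isT0 C.h01.symm h g
      · -- both adjacent to x1
        by_cases b0 : G.Adj v C.x0
        · exact C.caseEA huK hvK huP hvP C.isT1 C.isT0 C.h01.symm h b0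
        by_cases b2 : G.Adj v C.x2
        · exact C.caseEA huK hvK huP hvP C.isT1 C.isT2 C.h12 h b2
        · obtain ⟨w, hvw, hwx⟩ := exists_second hvP g
          have hwK : w ∈ C.K := C.nbrK hvK hvw
          have hwT : ¬ C.isT w := by
            rintro (hh | hh | hh)
            exacts [b0 (hh ▸ hvw), hwx hh, b2 (hh ▸ hvw)]
          have e1 : C.c s(u, C.x1) = 1 := by rw [C.csymm, C.cTN C.isT1 huK huP, C.idx1]
          have e2 : C.c s(C.x1, w) = 0 := by rw [C.cTK C.isT1 hwK hwT, C.idx1] <;> decide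
          have e3 : C.c s(w, v) = 2 := by
            rw [C.cKN hwK hwT hvK hvP, C.zc1 b0 g b2]
          refine C.w3 h (C.hK C.hx1 hwK (Ne.symm hwx)) hvw.symm ?_ ?_ ?_ <;>
            simp only [e1, e2, e3] <;> omega
      · exact C.caseEA huK hvK huP hvP C.isT1 C.isT2 C.h12 h g
      · exact C.caseEA huK hvK huP hvP C.isT2 C.isT0 C.h02.symm h g
      · exact C.caseEA huK hvK huP hvP C.isT2 C.isT1 C.h12.symm h g
      · -- both adjacent to x2
        by_cases b0 : G.Adj v C.x0
        · exact C.caseEA huK hvK huP hvP C.isT2 C.isT0 C.h02.symm h b0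
        by_cases b1 : G.Adj v C.x1
        · exact C.caseEA huK hvK huP hvP C.isT2 C.isT1 C.h12.symm h b1
        · obtain ⟨w, hvw, hwx⟩ := exists_second hvP g
          have hwK : w ∈ C.K := C.nbrK hvK hvw
          have hwT : ¬ C.isT w := by
            rintro (hh | hh | hh)
            exacts [b0 (hh ▸ hvw), b1 (hh ▸ hvw), hwx hh]
          have e1 : C.c s(u, C.x2) = 2 := by rw [C.csymm, C.cTN C.isT2 huK huP, C.idx2]
          have e2 : C.c s(C.x2, w) = 0 := by rw [C.cTK C.isT2 hwK hwT, C.idx2] <;> decide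
          have e3 : C.c s(w, v) = 1 := by
            rw [C.cKN hwK hwT hvK hvP, C.zc2 b0 b1 g]
          refine C.w3 h (C.hK C.hx2 hwK (Ne.symm hwx)) hvw.symm ?_ ?_ ?_ <;>
            simp only [e1, e2, e3] <;> omega
    · push_neg at hSv
      exact C.caseEB huK hvK huP hvP hSv.1 hSv.2.1 hSv.2.2 hSu
  · by_cases hSv : G.Adj v C.x0 ∨ G.Adj v C.x1 ∨ G.Adj v C.x2
    · push_neg at hSu
      exact C.rev (C.caseEB hvK huK hvP huP hSu.1 hSu.2.1 hSu.2.2 hSv)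
    · push_neg at hSu
      push_neg at hSv
      exact C.caseE3 huK hvK huP hvP hSu.1 hSu.2.1 hSu.2.2 hSv.1 hSv.2.1 hSv.2.2

theorem isRainbow : IsRainbow G C.c := by
  intro u v
  by_cases huv : u = v
  · subst huv; exact ⟨Walk.nil, by simp⟩
  by_cases hadj : G.Adj u v
  · exact C.w1 hadj
  by_cases huK : u ∈ C.K
  · by_cases hvK : v ∈ C.K
    · exact absurd (C.hK huK hvK huv) hadj
    · by_cases hvP : G.degree v = 1
      · exact C.caseKP huK hvP hadj
      · exact C.caseKN huK hvK hvP hadj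
  · by_cases hvK : v ∈ C.K
    · by_cases huP : G.degree u = 1
      · exact C.rev (C.caseKP hvK huP (fun h => hadj h.symm))
      · exact C.rev (C.caseKN hvK huK huP (fun h => hadj h.symm))
    · by_cases huP : G.degree u = 1
      · by_cases hvP : G.degree v = 1
        · exact C.casePP huP hvP huv
        · exact C.rev (C.caseNP hvK hvP huP)
      · by_cases hvP : G.degree v = 1
        · exact C.caseNP huK huP hvP
        · exact C.caseNN huK hvK huP hvP

lemma three_le (CC : Ctx V G) : 3 ≤ ({v : V | G.degree v = 1} : Set V).ncard := by
  have hsub : ({CC.y0, CC.y1, CC.y2} : Set V) ⊆ {v : V | G.degree v = 1} := by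
    intro a ha
    rcases ha with rfl | rfl | rfl
    exacts [CC.hd0, CC.hd1, CC.hd2]
  have h3 : ({CC.y0, CC.y1, CC.y2} : Set V).ncard = 3 :=
    Set.ncard_eq_three.mpr ⟨_, _, _, CC.y01, CC.y02, CC.y12, rfl⟩
  calc (3 : ℕ) = _ := h3.symm
    _ ≤ _ := Set.ncard_le_ncard hsub (Set.toFinite _)

lemma bound : ∀ e ∈ G.edgeSet, C.c e < ({v : V | G.degree v = 1} : Set V).ncard := by
  intro e he
  induction e with
  | _ u v =>
    rw [SimpleGraph.mem_edgeSet] at he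
    by_cases hu : G.degree u = 1
    · have hv : G.degree v ≠ 1 := fun hv =>
        C.hI u (C.PdnotK hu) v (C.PdnotK hv) he
      rw [C.cPend hu hv]
      exact C.hcollt u hu
    · by_cases hv : G.degree v = 1
      · rw [C.csymm, C.cPend hv hu]
        exact C.hcollt v hv
      · have h1 := C.c_lt3 he.ne hu hv
        have h2 := C.three_le
        omega


lemma first_edge_mem {x z : V} (q : G.Walk x z) (hxz : x ≠ z) (hdx : G.degree x = 1) :
    s(x, C.A x) ∈ q.edges := by
  cases q with
  | nil => exact absurd rfl hxz
  | cons h q' =>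
    rw [SimpleGraph.Walk.edges_cons]
    exact List.mem_cons.mpr (Or.inl (by rw [C.uniq hdx h]))

lemma lower (CC : Ctx V G) : ∀ k, RainbowColorable G k → ({v : V | G.degree v = 1} : Set V).ncard ≤ k := by
  intro k hk
  obtain ⟨cc, hcc, hrb⟩ := hk
  have hfin : ({v : V | G.degree v = 1} : Set V).Finite := Set.toFinite _
  rw [Set.ncard_eq_toFinset_card _ hfin]
  have hmaps : ∀ a ∈ hfin.toFinset, cc s(a, CC.A a) ∈ Finset.range k := by
    intro a _
    rw [Finset.mem_range]
    exact hcc _ (by rw [SimpleGraph.mem_edgeSet]; exact CC.hA a)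
  have hinj : (↑hfin.toFinset : Set V).InjOn (fun a => cc s(a, CC.A a)) := by
    intro a ha b hb hab
    simp only [Set.Finite.coe_toFinset, Set.mem_setOf_eq] at ha hb
    by_contra hne
    obtain ⟨q, hq⟩ := hrb a b
    have h1 : s(a, CC.A a) ∈ q.edges := CC.first_edge_mem q hne ha
    have h2 : s(b, CC.A b) ∈ q.edges := by
      have := CC.first_edge_mem q.reverse (Ne.symm hne) hb
      rwa [SimpleGraph.Walk.edges_reverse, List.mem_reverse] at this
    have hee : s(a, CC.A a) = s(b, CC.A b) :=
      List.inj_on_of_nodup_map hq h1 h2 (by simpa using hab)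
    rw [Sym2.eq_iff] at hee
    rcases hee with ⟨h, _⟩ | ⟨h, _⟩
    · exact hne h
    · have hadj : G.Adj b a := h ▸ CC.hA b
      exact CC.hI b (CC.PdnotK hb) a (CC.PdnotK ha) hadj
  have := Finset.card_le_card_of_injOn _ hmaps hinj
  simpa using this


end Ctx
end Stmt9Aux


/-- A connected split graph whose clique has size at least 3 and in which at least three
distinct clique vertices have pendant neighbours has `rc G` equal to its number of
pendant vertices. -/
theorem stmt9 {V : Type*} [Fintype V] (G : SimpleGraph V) [DecidableRel G.Adj]
    (hconn : G.Connected)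
    (K : Set V) (hK : G.IsClique K) (hI : IsIndepSet' G Kᶜ) (h3 : 3 ≤ K.ncard)
    (hx : ∃ x₀ x₁ x₂ : V, x₀ ∈ K ∧ x₁ ∈ K ∧ x₂ ∈ K ∧
      x₀ ≠ x₁ ∧ x₀ ≠ x₂ ∧ x₁ ≠ x₂ ∧
      (∃ y₀, G.Adj x₀ y₀ ∧ G.degree y₀ = 1) ∧
      (∃ y₁, G.Adj x₁ y₁ ∧ G.degree y₁ = 1) ∧
      (∃ y₂, G.Adj x₂ y₂ ∧ G.degree y₂ = 1)) :
    rc G = {v : V | G.degree v = 1}.ncard := by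
  classical
  obtain ⟨x0, x1, x2, hx0, hx1, hx2, h01, h02, h12,
    ⟨y0, hy0, hd0⟩, ⟨y1, hy1, hd1⟩, ⟨y2, hy2, hd2⟩⟩ := hx
  -- every vertex has a neighbour
  have hnbr : ∀ v : V, ∃ w, G.Adj v w := by
    intro v
    by_cases h : v = x0
    · obtain ⟨p⟩ := hconn.preconnected v x1
      exact ⟨p.getVert 1, p.adj_snd (SimpleGraph.Walk.not_nil_of_ne
        (by rw [h]; exact h01))⟩
    · obtain ⟨p⟩ := hconn.preconnected v x0
      exact ⟨p.getVert 1, p.adj_snd (SimpleGraph.Walk.not_nil_of_ne h)⟩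
  set A : V → V := fun v => (hnbr v).choose with hAdef
  have hA : ∀ v, G.Adj v (A v) := fun v => (hnbr v).choose_spec
  -- uniqueness of pendant neighbours
  have huniq : ∀ y w w' : V, G.degree y = 1 → G.Adj y w → G.Adj y w' → w = w' := by
    intro y w w' hd hw hw'
    rw [← SimpleGraph.card_neighborFinset_eq_degree] at hd
    obtain ⟨a, ha⟩ := Finset.card_eq_one.mp hd
    have h1 : w ∈ G.neighborFinset y := by simpa using hw
    have h2 : w' ∈ G.neighborFinset y := by simpa using hw'
    rw [ha, Finset.mem_singleton] at h1 h2
    rw [h1, h2]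
  have hy01 : y0 ≠ y1 := by
    intro h
    exact h01 (huniq y0 x0 x1 hd0 hy0.symm (by rw [h]; exact hy1.symm))
  have hy02 : y0 ≠ y2 := by
    intro h
    exact h02 (huniq y0 x0 x2 hd0 hy0.symm (by rw [h]; exact hy2.symm))
  have hy12 : y1 ≠ y2 := by
    intro h
    exact h12 (huniq y1 x1 x2 hd1 hy1.symm (by rw [h]; exact hy2.symm))
  -- the pendant set as a finset
  have hfin : ({v : V | G.degree v = 1} : Set V).Finite := Set.toFinite _
  set Pf : Finset V := hfin.toFinset with hPf
  have hmemPf : ∀ v, v ∈ Pf ↔ G.degree v = 1 := fun v => by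
    rw [hPf, Set.Finite.mem_toFinset]; rfl
  have htri : ({y0, y1, y2} : Finset V) ⊆ Pf := by
    intro a ha
    rcases Finset.mem_insert.mp ha with rfl | ha'
    · exact (hmemPf _).mpr hd0
    rcases Finset.mem_insert.mp ha' with rfl | ha''
    · exact (hmemPf _).mpr hd1
    rw [Finset.mem_singleton] at ha''
    subst ha''
    exact (hmemPf _).mpr hd2
  have htricard : ({y0, y1, y2} : Finset V).card = 3 := by
    rw [Finset.card_insert_of_notMem (by simp [hy01, hy02]),
      Finset.card_insert_of_notMem (by simp [hy12]), Finset.card_singleton]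
  have hp3 : 3 ≤ Pf.card := htricard ▸ Finset.card_le_card htri
  have hPcard : ({v : V | G.degree v = 1} : Set V).ncard = Pf.card :=
    Set.ncard_eq_toFinset_card _ hfin
  -- the colouring of pendant vertices
  set Q : Finset V := Pf \ {y0, y1, y2} with hQ
  have hQcard : Q.card = Pf.card - 3 := by
    rw [hQ, Finset.card_sdiff_of_subset htri, htricard]
  set eqv := Q.equivFin with heqv
  set col : V → ℕ := fun v => if v = y0 then 0 else if v = y1 then 1 else if v = y2 then 2
    else if h : v ∈ Q then ((eqv ⟨v, h⟩ : Fin _) : ℕ) + 3 else 0 with hcol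
  have hQmem : ∀ v, G.degree v = 1 → v ≠ y0 → v ≠ y1 → v ≠ y2 → v ∈ Q := by
    intro v hv n0 n1 n2
    rw [hQ, Finset.mem_sdiff]
    exact ⟨(hmemPf v).mpr hv, by simp [n0, n1, n2]⟩
  have hcolval : ∀ v, v ≠ y0 → v ≠ y1 → v ≠ y2 → ∀ h : v ∈ Q,
      col v = ((eqv ⟨v, h⟩ : Fin _) : ℕ) + 3 := by
    intro v n0 n1 n2 h
    simp only [hcol, if_neg n0, if_neg n1, if_neg n2, dif_pos h]
  have hcol0 : col y0 = 0 := by simp [hcol]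
  have hcol1 : col y1 = 1 := by simp [hcol, Ne.symm hy01]
  have hcol2 : col y2 = 2 := by simp [hcol, Ne.symm hy02, Ne.symm hy12]
  have hcolhi : ∀ v, G.degree v = 1 → v ≠ y0 → v ≠ y1 → v ≠ y2 → 3 ≤ col v := by
    intro v hv n0 n1 n2
    rw [hcolval v n0 n1 n2 (hQmem v hv n0 n1 n2)]
    omega
  have hcollt : ∀ v, G.degree v = 1 → col v < ({v : V | G.degree v = 1} : Set V).ncard := by
    intro v hv
    rw [hPcard]
    by_cases n0 : v = y0
    · subst n0; rw [hcol0]; omega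
    by_cases n1 : v = y1
    · subst n1; rw [hcol1]; omega
    by_cases n2 : v = y2
    · subst n2; rw [hcol2]; omega
    · have h := hQmem v hv n0 n1 n2
      rw [hcolval v n0 n1 n2 h]
      have hlt := (eqv ⟨v, h⟩).isLt
      omega
  have hcolinj : Set.InjOn col {v | G.degree v = 1} := by
    intro a ha b hb hab
    simp only [Set.mem_setOf_eq] at ha hb
    by_cases a0 : a = y0
    · rw [a0, hcol0] at hab
      by_cases b0 : b = y0
      · exact a0.trans b0.symm
      by_cases b1 : b = y1
      · rw [b1, hcol1] at hab; omega
      by_cases b2 : b = y2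
      · rw [b2, hcol2] at hab; omega
      · rw [hcolval b b0 b1 b2 (hQmem b hb b0 b1 b2)] at hab; omega
    by_cases a1 : a = y1
    · rw [a1, hcol1] at hab
      by_cases b0 : b = y0
      · rw [b0, hcol0] at hab; omega
      by_cases b1 : b = y1
      · exact a1.trans b1.symm
      by_cases b2 : b = y2
      · rw [b2, hcol2] at hab; omega
      · rw [hcolval b b0 b1 b2 (hQmem b hb b0 b1 b2)] at hab; omega
    by_cases a2 : a = y2
    · rw [a2, hcol2] at hab
      by_cases b0 : b = y0
      · rw [b0, hcol0] at hab; omega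
      by_cases b1 : b = y1
      · rw [b1, hcol1] at hab; omega
      by_cases b2 : b = y2
      · exact a2.trans b2.symm
      · rw [hcolval b b0 b1 b2 (hQmem b hb b0 b1 b2)] at hab; omega
    · have haQ := hQmem a ha a0 a1 a2
      rw [hcolval a a0 a1 a2 haQ] at hab
      by_cases b0 : b = y0
      · rw [b0, hcol0] at hab; omega
      by_cases b1 : b = y1
      · rw [b1, hcol1] at hab; omega
      by_cases b2 : b = y2
      · rw [b2, hcol2] at hab; omega
      · have hbQ := hQmem b hb b0 b1 b2
        rw [hcolval b b0 b1 b2 hbQ] at hab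
        have hfe : eqv ⟨a, haQ⟩ = eqv ⟨b, hbQ⟩ := Fin.val_injective (by omega)
        have := eqv.injective hfe
        exact congrArg Subtype.val this
  -- assemble the context
  have C : Stmt9Aux.Ctx V G :=
    { K := K, hK := hK, hI := fun u hu v hv => hI u hu v hv, hconn := hconn,
      x0 := x0, x1 := x1, x2 := x2, hx0 := hx0, hx1 := hx1, hx2 := hx2,
      h01 := h01, h02 := h02, h12 := h12,
      y0 := y0, y1 := y1, y2 := y2, hy0 := hy0, hy1 := hy1, hy2 := hy2,
      hd0 := hd0, hd1 := hd1, hd2 := hd2,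
      A := A, hA := hA, col := col,
      hcol0 := hcol0, hcol1 := hcol1, hcol2 := hcol2,
      hcolinj := hcolinj, hcolhi := hcolhi, hcollt := hcollt }
  have hub : ({v : V | G.degree v = 1} : Set V).ncard ∈ {k | RainbowColorable G k} :=
    ⟨C.c, C.bound, C.isRainbow⟩
  have hlb := C.lower
  exact le_antisymm (Nat.sInf_le hub) (le_csInf ⟨_, hub⟩ fun k hk => hlb k hk)
end

section
/- Let G be a connected split graph with maximal clique K, |K| ≥ 3, and exactly 4 pendant vertices y₀, y₁, y₂, y₃, all adjacent to the same clique vertex x₀. Then rc(G) = 4. -/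
open SimpleGraph Finset

open Classical in
private noncomputable def myCol {V : Type*} (K : Set V) (x₀ a : V) (y : Fin 4 → V)
    (f : V → V) (u v : V) : ℕ :=
  if u ∈ K then
    if v ∈ K then
      if u = x₀ then (if v = a then 2 else 3)
      else if v = x₀ then (if u = a then 2 else 3)
      else if u = a ∨ v = a then 0 else 2
    else if h : ∃ i, v = y i then (h.choose : Fin 4).val
      else if u = f v then 0 else 1
  else if v ∈ K then
      if h : ∃ i, u = y i then (h.choose : Fin 4).val
      else if v = f u then 0 else 1
    else 0

private lemma myCol_symm {V : Type*} (K : Set V) (x₀ a : V) (y : Fin 4 → V)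
    (f : V → V) (u v : V) : myCol K x₀ a y f u v = myCol K x₀ a y f v u := by
  classical
  unfold myCol
  split_ifs <;> simp_all <;> tauto

private lemma myCol_yx {V : Type*} (K : Set V) (x₀ a : V) (y : Fin 4 → V)
    (f : V → V) (hyinj : Function.Injective y) (i : Fin 4)
    (hy : y i ∉ K) (hx : x₀ ∈ K) : myCol K x₀ a y f (y i) x₀ = i := by
  classical
  unfold myCol
  rw [if_neg hy, if_pos hx]
  have h : ∃ j, y i = y j := ⟨i, rfl⟩
  rw [dif_pos h]
  have h2 : h.choose = i := hyinj h.choose_spec.symm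
  rw [h2]

private lemma myCol_x02 {V : Type*} (K : Set V) (x₀ a : V) (y : Fin 4 → V)
    (f : V → V) (hx : x₀ ∈ K) (ha : a ∈ K) : myCol K x₀ a y f x₀ a = 2 := by
  classical
  unfold myCol
  rw [if_pos hx, if_pos ha, if_pos rfl, if_pos rfl]

private lemma myCol_x03 {V : Type*} (K : Set V) (x₀ a : V) (y : Fin 4 → V)
    (f : V → V) {v : V} (hx : x₀ ∈ K) (hv : v ∈ K) (hva : v ≠ a) :
    myCol K x₀ a y f x₀ v = 3 := by
  classical
  unfold myCol
  rw [if_pos hx, if_pos hv, if_pos rfl, if_neg hva]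

private lemma myCol_x023 {V : Type*} (K : Set V) (x₀ a : V) (y : Fin 4 → V)
    (f : V → V) {v : V} (hx : x₀ ∈ K) (hv : v ∈ K) :
    myCol K x₀ a y f x₀ v = 2 ∨ myCol K x₀ a y f x₀ v = 3 := by
  classical
  by_cases h : v = a
  · rw [h]; left; exact myCol_x02 K x₀ a y f hx (h ▸ hv)
  · right; exact myCol_x03 K x₀ a y f hx hv h

private lemma myCol_av {V : Type*} (K : Set V) (x₀ a : V) (y : Fin 4 → V)
    (f : V → V) {v : V} (ha : a ∈ K) (hv : v ∈ K) (hax : a ≠ x₀) (hvx : v ≠ x₀) :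
    myCol K x₀ a y f a v = 0 := by
  classical
  unfold myCol
  rw [if_pos ha, if_pos hv, if_neg hax, if_neg hvx, if_pos (Or.inl rfl)]

private lemma myCol_int {V : Type*} (K : Set V) (x₀ a : V) (y : Fin 4 → V)
    (f : V → V) {u v : V} (hu : u ∈ K) (hv : v ∈ K) (hux : u ≠ x₀) (hvx : v ≠ x₀)
    (hua : u ≠ a) (hva : v ≠ a) :
    myCol K x₀ a y f u v = 2 := by
  classical
  unfold myCol
  rw [if_pos hu, if_pos hv, if_neg hux, if_neg hvx, if_neg (by tauto)]

private lemma myCol_s {V : Type*} (K : Set V) (x₀ a : V) (y : Fin 4 → V)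
    (f : V → V) {s u : V} (hs : s ∉ K) (hsy : ¬ ∃ i, s = y i) (hu : u ∈ K) :
    (u = f s → myCol K x₀ a y f s u = 0) ∧ (u ≠ f s → myCol K x₀ a y f s u = 1) := by
  classical
  unfold myCol
  rw [if_neg hs, if_pos hu, dif_neg hsy]
  constructor
  · intro h; rw [if_pos h]
  · intro h; rw [if_neg h]

private lemma myCol_KK_ne1 {V : Type*} (K : Set V) (x₀ a : V) (y : Fin 4 → V)
    (f : V → V) {u v : V} (hu : u ∈ K) (hv : v ∈ K) :
    myCol K x₀ a y f u v ≠ 1 := by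
  classical
  unfold myCol
  rw [if_pos hu, if_pos hv]
  split_ifs <;> simp
/-- A connected split graph with maximal clique `K`, `|K| ≥ 3`, and exactly four pendant
vertices, all adjacent to a single clique vertex `x₀`, has rainbow connection number 4. -/
theorem stmt10 {V : Type*} [Fintype V] (G : SimpleGraph V) [DecidableRel G.Adj]
    (hconn : G.Connected)
    (K : Set V) (hK : G.IsClique K) (hI : IsIndepSet' G Kᶜ)
    (hmax : ∀ v ∉ K, ¬ G.IsClique (insert v K)) (h3 : 3 ≤ K.ncard)
    (x₀ : V) (hx₀ : x₀ ∈ K)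
    (y : Fin 4 → V) (hyinj : Function.Injective y)
    (hpend : ∀ i, G.degree (y i) = 1)
    (hadj : ∀ i, G.Adj x₀ (y i))
    (hall : ∀ v : V, G.degree v = 1 → ∃ i, v = y i) :
    rc G = 4 := by
  classical
  -- obtain two further clique vertices
  have hKfin : K.Finite := Set.toFinite K
  have hcard : 3 ≤ hKfin.toFinset.card := by
    rwa [← Set.ncard_eq_toFinset_card K hKfin]
  have hx₀' : x₀ ∈ hKfin.toFinset := hKfin.mem_toFinset.2 hx₀
  obtain ⟨aa, ha'⟩ : ((hKfin.toFinset.erase x₀)).Nonempty := by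
    rw [← Finset.card_pos, Finset.card_erase_of_mem hx₀']; omega
  have haK : aa ∈ K := hKfin.mem_toFinset.1 (Finset.mem_of_mem_erase ha')
  have hax : aa ≠ x₀ := Finset.ne_of_mem_erase ha'
  obtain ⟨b, hb'⟩ : (((hKfin.toFinset.erase x₀).erase aa)).Nonempty := by
    rw [← Finset.card_pos, Finset.card_erase_of_mem ha', Finset.card_erase_of_mem hx₀']; omega
  have hbK : b ∈ K := hKfin.mem_toFinset.1 (Finset.mem_of_mem_erase (Finset.mem_of_mem_erase hb'))
  have hba : b ≠ aa := Finset.ne_of_mem_erase hb'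
  have hbx : b ≠ x₀ := Finset.ne_of_mem_erase (Finset.mem_of_mem_erase hb')
  -- clique adjacency
  have hKadj : ∀ {u v : V}, u ∈ K → v ∈ K → u ≠ v → G.Adj u v := fun hu hv h => hK hu hv h
  -- pendants lie outside K
  have hyK : ∀ i, y i ∉ K := by
    intro i hyiK
    obtain ⟨cc, hcK, hcx, hcy⟩ : ∃ cc, cc ∈ K ∧ cc ≠ x₀ ∧ cc ≠ y i := by
      by_cases h : aa = y i
      · exact ⟨b, hbK, hbx, by rw [← h]; exact hba⟩
      · exact ⟨aa, haK, hax, h⟩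
    have h1 : x₀ ∈ G.neighborFinset (y i) := (SimpleGraph.mem_neighborFinset _ _ _).2 (hadj i).symm
    have h2 : cc ∈ G.neighborFinset (y i) :=
      (SimpleGraph.mem_neighborFinset _ _ _).2 (hKadj hyiK hcK (Ne.symm hcy))
    have h12 : 1 < (G.neighborFinset (y i)).card :=
      Finset.one_lt_card.2 ⟨x₀, h1, cc, h2, Ne.symm hcx⟩
    have := hpend i
    rw [show G.degree (y i) = (G.neighborFinset (y i)).card from rfl] at this
    omega
  -- the only neighbour of a pendant is x₀
  have hNy : ∀ (i : Fin 4) (w : V), G.Adj (y i) w → w = x₀ := by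
    intro i w hw
    by_contra hne
    have h1 : x₀ ∈ G.neighborFinset (y i) := (SimpleGraph.mem_neighborFinset _ _ _).2 (hadj i).symm
    have h2 : w ∈ G.neighborFinset (y i) := (SimpleGraph.mem_neighborFinset _ _ _).2 hw
    have h12 : 1 < (G.neighborFinset (y i)).card :=
      Finset.one_lt_card.2 ⟨w, h2, x₀, h1, hne⟩
    have := hpend i
    rw [show G.degree (y i) = (G.neighborFinset (y i)).card from rfl] at this
    omega
  -- neighbours of outside vertices lie in K
  have hsK : ∀ {s w : V}, s ∉ K → G.Adj s w → w ∈ K := by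
    intro s w hs hw
    by_contra hwK
    exact hI s hs w hwK hw
  -- outside non-pendant vertices have at least two neighbours
  have hdeg2 : ∀ s, s ∉ K → (¬ ∃ i, s = y i) → 1 < (G.neighborFinset s).card := by
    intro s hs hsy
    have hsx : s ≠ x₀ := fun h => hs (h ▸ hx₀)
    have h0 : (G.neighborFinset s).Nonempty := by
      obtain ⟨p⟩ := hconn.preconnected x₀ s
      cases hp : p.reverse with
      | nil => exact absurd rfl hsx
      | cons h q => exact ⟨_, (SimpleGraph.mem_neighborFinset _ _ _).2 h⟩
    have hne1 : (G.neighborFinset s).card ≠ 1 := by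
      intro h
      exact hsy (hall s (by rw [show G.degree s = (G.neighborFinset s).card from rfl]; exact h))
    have := Finset.card_pos.2 h0
    omega
  -- choice of the two special neighbours
  have hext : ∀ s : V, ∃ fgp : V × V, s ∉ K → (¬ ∃ i, s = y i) →
      (G.Adj s fgp.1 ∧ G.Adj s fgp.2 ∧ fgp.1 ≠ fgp.2 ∧ fgp.1 ≠ x₀ ∧
        (G.Adj s x₀ → fgp.2 = x₀) ∧ (G.Adj s aa → fgp.1 = aa)) := by
    intro s
    by_cases hs : s ∉ K
    · by_cases hsy : ¬ ∃ i, s = y i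
      · have hcard2 := hdeg2 s hs hsy
        by_cases hx : G.Adj s x₀
        · by_cases ha : G.Adj s aa
          · exact ⟨(aa, x₀), fun _ _ => ⟨ha, hx, hax, hax, fun _ => rfl, fun _ => rfl⟩⟩
          · obtain ⟨w, hw, hwx⟩ := Finset.exists_mem_ne hcard2 x₀
            exact ⟨(w, x₀), fun _ _ =>
              ⟨(SimpleGraph.mem_neighborFinset _ _ _).1 hw, hx, hwx, hwx, fun _ => rfl,
                fun h => absurd h ha⟩⟩
        · by_cases ha : G.Adj s aa
          · obtain ⟨w, hw, hwa⟩ := Finset.exists_mem_ne hcard2 aa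
            have hwadj := (SimpleGraph.mem_neighborFinset _ _ _).1 hw
            exact ⟨(aa, w), fun _ _ => ⟨ha, hwadj, Ne.symm hwa, hax,
              fun h => absurd h hx, fun _ => rfl⟩⟩
          · obtain ⟨w, hw, w', hw', hww'⟩ := Finset.one_lt_card.1 hcard2
            have hwadj := (SimpleGraph.mem_neighborFinset _ _ _).1 hw
            have hwadj' := (SimpleGraph.mem_neighborFinset _ _ _).1 hw'
            exact ⟨(w, w'), fun _ _ => ⟨hwadj, hwadj', hww',
              fun h => hx (h ▸ hwadj), fun h => absurd h hx, fun h => absurd h ha⟩⟩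
      · exact ⟨(x₀, x₀), fun _ h => absurd h hsy⟩
    · exact ⟨(x₀, x₀), fun h => absurd h hs⟩
  choose fg hfg using hext
  set f : V → V := fun s => (fg s).1 with hf
  set g : V → V := fun s => (fg s).2 with hg
  -- the colouring
  set col : V → V → ℕ := myCol K x₀ aa y f with hcol
  have colsymm : ∀ u v : V, col u v = col v u := myCol_symm K x₀ aa y f
  set cc : Sym2 V → ℕ := Sym2.lift ⟨col, colsymm⟩ with hcc
  -- colour values
  have cY : ∀ i : Fin 4, col (y i) x₀ = i := fun i => myCol_yx K x₀ aa y f hyinj i (hyK i) hx₀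
  have c2 : col x₀ aa = 2 := myCol_x02 K x₀ aa y f hx₀ haK
  have c3 : ∀ {v : V}, v ∈ K → v ≠ aa → col x₀ v = 3 := fun hv hva =>
    myCol_x03 K x₀ aa y f hx₀ hv hva
  have c23 : ∀ {v : V}, v ∈ K → (col x₀ v = 2 ∨ col x₀ v = 3) := fun hv =>
    myCol_x023 K x₀ aa y f hx₀ hv
  have c0 : ∀ {v : V}, v ∈ K → v ≠ x₀ → col aa v = 0 := fun hv hvx =>
    myCol_av K x₀ aa y f haK hv hax hvx
  have cInt : ∀ {u v : V}, u ∈ K → v ∈ K → u ≠ x₀ → v ≠ x₀ → u ≠ aa → v ≠ aa →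
      col u v = 2 := fun hu hv hux hvx hua hva => myCol_int K x₀ aa y f hu hv hux hvx hua hva
  have cS : ∀ {s u : V}, s ∉ K → (¬ ∃ i, s = y i) → u ∈ K →
      ((u = f s → col s u = 0) ∧ (u ≠ f s → col s u = 1)) := fun hs hsy hu =>
    myCol_s K x₀ aa y f hs hsy hu
  have cne1 : ∀ {u v : V}, u ∈ K → v ∈ K → col u v ≠ 1 := fun hu hv =>
    myCol_KK_ne1 K x₀ aa y f hu hv
  -- bound
  have hbound : ∀ e : Sym2 V, cc e < 4 := by
    intro e
    induction e using Sym2.ind with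
    | _ u v =>
      rw [hcc, Sym2.lift_mk]
      show myCol K x₀ aa y f u v < 4
      unfold myCol
      split_ifs <;> first | omega | exact Fin.is_lt _
  -- reversing walks
  have symmW : ∀ {u v : V}, (∃ p : G.Walk u v, ((p.edges.map cc).Nodup)) →
      ∃ p : G.Walk v u, ((p.edges.map cc).Nodup) := by
    rintro u v ⟨p, hp⟩
    exact ⟨p.reverse, by rw [SimpleGraph.Walk.edges_reverse, List.map_reverse,
      List.nodup_reverse]; exact hp⟩
  -- pendant to pendant
  have WYY : ∀ i j : Fin 4, ∃ p : G.Walk (y i) (y j), ((p.edges.map cc).Nodup) := by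
    intro i j
    by_cases hij : i = j
    · subst hij; exact ⟨SimpleGraph.Walk.nil, by simp⟩
    · refine ⟨SimpleGraph.Walk.cons (hadj i).symm (SimpleGraph.Walk.cons (hadj j)
        SimpleGraph.Walk.nil), ?_⟩
      rw [hcc]
      simp only [SimpleGraph.Walk.edges_cons, SimpleGraph.Walk.edges_nil, List.map_cons,
        List.map_nil, Sym2.lift_mk]
      rw [cY i, colsymm x₀ (y j), cY j]
      simp only [List.nodup_cons, List.mem_singleton, List.not_mem_nil, not_false_iff,
        List.nodup_nil, and_true]
      exact fun h => hij (Fin.val_injective h)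
  -- pendant to clique vertex
  have WKY : ∀ (i : Fin 4) (u : V), u ∈ K → ∃ p : G.Walk (y i) u, ((p.edges.map cc).Nodup) := by
    intro i u hu
    by_cases hux : u = x₀
    · subst hux; exact ⟨SimpleGraph.Walk.cons (hadj i).symm SimpleGraph.Walk.nil, by simp⟩
    · have hxu : G.Adj x₀ u := hKadj hx₀ hu (Ne.symm hux)
      have e1 := cY i
      by_cases hua : u = aa
      · subst hua
        fin_cases i
        · exact ⟨SimpleGraph.Walk.cons (hadj 0).symm (SimpleGraph.Walk.cons hxu
            SimpleGraph.Walk.nil), by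
            rw [hcc]
            simp only [SimpleGraph.Walk.edges_cons, SimpleGraph.Walk.edges_nil, List.map_cons,
              List.map_nil, Sym2.lift_mk]
            rw [e1, c2]; decide⟩
        · exact ⟨SimpleGraph.Walk.cons (hadj 1).symm (SimpleGraph.Walk.cons hxu
            SimpleGraph.Walk.nil), by
            rw [hcc]
            simp only [SimpleGraph.Walk.edges_cons, SimpleGraph.Walk.edges_nil, List.map_cons,
              List.map_nil, Sym2.lift_mk]
            rw [e1, c2]; decide⟩
        · -- i = 2 : detour through b
          refine ⟨SimpleGraph.Walk.cons (hadj 2).symm (SimpleGraph.Walk.cons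
            (hKadj hx₀ hbK (Ne.symm hbx)) (SimpleGraph.Walk.cons (hKadj hbK haK hba)
            SimpleGraph.Walk.nil)), ?_⟩
          rw [hcc]
          simp only [SimpleGraph.Walk.edges_cons, SimpleGraph.Walk.edges_nil, List.map_cons,
            List.map_nil, Sym2.lift_mk]
          rw [e1, c3 hbK hba, colsymm b _, c0 hbK hbx]; decide
        · exact ⟨SimpleGraph.Walk.cons (hadj 3).symm (SimpleGraph.Walk.cons hxu
            SimpleGraph.Walk.nil), by
            rw [hcc]
            simp only [SimpleGraph.Walk.edges_cons, SimpleGraph.Walk.edges_nil, List.map_cons,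
              List.map_nil, Sym2.lift_mk]
            rw [e1, c2]; decide⟩
      · have e3 : col x₀ u = 3 := c3 hu hua
        fin_cases i
        · exact ⟨SimpleGraph.Walk.cons (hadj 0).symm (SimpleGraph.Walk.cons hxu
            SimpleGraph.Walk.nil), by
            rw [hcc]
            simp only [SimpleGraph.Walk.edges_cons, SimpleGraph.Walk.edges_nil, List.map_cons,
              List.map_nil, Sym2.lift_mk]
            rw [e1, e3]; decide⟩
        · exact ⟨SimpleGraph.Walk.cons (hadj 1).symm (SimpleGraph.Walk.cons hxu
            SimpleGraph.Walk.nil), by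
            rw [hcc]
            simp only [SimpleGraph.Walk.edges_cons, SimpleGraph.Walk.edges_nil, List.map_cons,
              List.map_nil, Sym2.lift_mk]
            rw [e1, e3]; decide⟩
        · exact ⟨SimpleGraph.Walk.cons (hadj 2).symm (SimpleGraph.Walk.cons hxu
            SimpleGraph.Walk.nil), by
            rw [hcc]
            simp only [SimpleGraph.Walk.edges_cons, SimpleGraph.Walk.edges_nil, List.map_cons,
              List.map_nil, Sym2.lift_mk]
            rw [e1, e3]; decide⟩
        · -- i = 3 : detour through aa
          refine ⟨SimpleGraph.Walk.cons (hadj 3).symm (SimpleGraph.Walk.cons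
            (hKadj hx₀ haK (Ne.symm hax)) (SimpleGraph.Walk.cons
            (hKadj haK hu (fun h => hua h.symm)) SimpleGraph.Walk.nil)), ?_⟩
          rw [hcc]
          simp only [SimpleGraph.Walk.edges_cons, SimpleGraph.Walk.edges_nil, List.map_cons,
            List.map_nil, Sym2.lift_mk]
          rw [e1, c2, c0 hu hux]; decide
  -- outside non-pendant vertex to clique vertex
  have WKS : ∀ (s u : V), s ∉ K → (¬ ∃ i, s = y i) → u ∈ K →
      ∃ p : G.Walk s u, ((p.edges.map cc).Nodup) := by
    intro s u hs hsy hu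
    obtain ⟨hfa, hga, hfgne, hfx, hgx0, hfa'⟩ := hfg s hs hsy
    by_cases hadjsu : G.Adj s u
    · exact ⟨SimpleGraph.Walk.cons hadjsu SimpleGraph.Walk.nil, by simp⟩
    · have hgK : g s ∈ K := hsK hs hga
      have hgu : g s ≠ u := fun h => hadjsu (h ▸ hga)
      refine ⟨SimpleGraph.Walk.cons hga (SimpleGraph.Walk.cons (hKadj hgK hu hgu)
        SimpleGraph.Walk.nil), ?_⟩
      rw [hcc]
      simp only [SimpleGraph.Walk.edges_cons, SimpleGraph.Walk.edges_nil, List.map_cons,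
        List.map_nil, Sym2.lift_mk]
      rw [(cS hs hsy hgK).2 (Ne.symm hfgne)]
      simp only [List.nodup_cons, List.mem_singleton, List.not_mem_nil, not_false_iff,
        List.nodup_nil, and_true]
      exact fun h => cne1 hgK hu h.symm
  -- pendant to outside non-pendant vertex
  have WYS : ∀ (i : Fin 4) (s : V), s ∉ K → (¬ ∃ i, s = y i) →
      ∃ p : G.Walk (y i) s, ((p.edges.map cc).Nodup) := by
    intro i s hs hsy
    obtain ⟨hfa, hga, hfgne, hfx, hgx0, hfa'⟩ := hfg s hs hsy
    have hfK : f s ∈ K := hsK hs hfa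
    have hgK : g s ∈ K := hsK hs hga
    have eSf : col s (f s) = 0 := (cS hs hsy hfK).1 rfl
    have eSg : col s (g s) = 1 := (cS hs hsy hgK).2 (Ne.symm hfgne)
    have hxf : G.Adj x₀ (f s) := hKadj hx₀ hfK (Ne.symm hfx)
    have e1 := cY i
    by_cases hsx : G.Adj s x₀
    · have hgx : g s = x₀ := hgx0 hsx
      have eSx : col s x₀ = 1 := by rw [← hgx]; exact eSg
      fin_cases i
      · exact ⟨SimpleGraph.Walk.cons (hadj 0).symm (SimpleGraph.Walk.cons hsx.symm
          SimpleGraph.Walk.nil), by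
          rw [hcc]
          simp only [SimpleGraph.Walk.edges_cons, SimpleGraph.Walk.edges_nil, List.map_cons,
            List.map_nil, Sym2.lift_mk]
          rw [e1, colsymm x₀ s, eSx]; decide⟩
      · refine ⟨SimpleGraph.Walk.cons (hadj 1).symm (SimpleGraph.Walk.cons hxf
          (SimpleGraph.Walk.cons hfa.symm SimpleGraph.Walk.nil)), ?_⟩
        rw [hcc]
        simp only [SimpleGraph.Walk.edges_cons, SimpleGraph.Walk.edges_nil, List.map_cons,
          List.map_nil, Sym2.lift_mk]
        rw [e1, colsymm (f s) s, eSf]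
        rcases c23 hfK with h | h <;> rw [h] <;> decide
      · exact ⟨SimpleGraph.Walk.cons (hadj 2).symm (SimpleGraph.Walk.cons hsx.symm
          SimpleGraph.Walk.nil), by
          rw [hcc]
          simp only [SimpleGraph.Walk.edges_cons, SimpleGraph.Walk.edges_nil, List.map_cons,
            List.map_nil, Sym2.lift_mk]
          rw [e1, colsymm x₀ s, eSx]; decide⟩
      · exact ⟨SimpleGraph.Walk.cons (hadj 3).symm (SimpleGraph.Walk.cons hsx.symm
          SimpleGraph.Walk.nil), by
          rw [hcc]
          simp only [SimpleGraph.Walk.edges_cons, SimpleGraph.Walk.edges_nil, List.map_cons,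
            List.map_nil, Sym2.lift_mk]
          rw [e1, colsymm x₀ s, eSx]; decide⟩
    · have hgx : g s ≠ x₀ := fun h => hsx (h ▸ hga)
      have hxg : G.Adj x₀ (g s) := hKadj hx₀ hgK (Ne.symm hgx)
      fin_cases i
      · refine ⟨SimpleGraph.Walk.cons (hadj 0).symm (SimpleGraph.Walk.cons hxg
          (SimpleGraph.Walk.cons hga.symm SimpleGraph.Walk.nil)), ?_⟩
        rw [hcc]
        simp only [SimpleGraph.Walk.edges_cons, SimpleGraph.Walk.edges_nil, List.map_cons,
          List.map_nil, Sym2.lift_mk]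
        rw [e1, colsymm (g s) s, eSg]
        rcases c23 hgK with h | h <;> rw [h] <;> decide
      · refine ⟨SimpleGraph.Walk.cons (hadj 1).symm (SimpleGraph.Walk.cons hxf
          (SimpleGraph.Walk.cons hfa.symm SimpleGraph.Walk.nil)), ?_⟩
        rw [hcc]
        simp only [SimpleGraph.Walk.edges_cons, SimpleGraph.Walk.edges_nil, List.map_cons,
          List.map_nil, Sym2.lift_mk]
        rw [e1, colsymm (f s) s, eSf]
        rcases c23 hfK with h | h <;> rw [h] <;> decide
      · by_cases hfsa : f s = aa
        · have hgsa : g s ≠ aa := fun h => hfgne (show f s = g s by rw [hfsa, ← h])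
          refine ⟨SimpleGraph.Walk.cons (hadj 2).symm (SimpleGraph.Walk.cons hxg
            (SimpleGraph.Walk.cons hga.symm SimpleGraph.Walk.nil)), ?_⟩
          rw [hcc]
          simp only [SimpleGraph.Walk.edges_cons, SimpleGraph.Walk.edges_nil, List.map_cons,
            List.map_nil, Sym2.lift_mk]
          rw [e1, colsymm (g s) s, eSg, c3 hgK hgsa]; decide
        · refine ⟨SimpleGraph.Walk.cons (hadj 2).symm (SimpleGraph.Walk.cons hxf
            (SimpleGraph.Walk.cons hfa.symm SimpleGraph.Walk.nil)), ?_⟩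
          rw [hcc]
          simp only [SimpleGraph.Walk.edges_cons, SimpleGraph.Walk.edges_nil, List.map_cons,
            List.map_nil, Sym2.lift_mk]
          rw [e1, colsymm (f s) s, eSf, c3 hfK hfsa]; decide
      · by_cases hsa : G.Adj s aa
        · have hfsa : f s = aa := hfa' hsa
          refine ⟨SimpleGraph.Walk.cons (hadj 3).symm (SimpleGraph.Walk.cons
            (hKadj hx₀ haK (Ne.symm hax)) (SimpleGraph.Walk.cons hsa.symm
            SimpleGraph.Walk.nil)), ?_⟩
          rw [hcc]
          simp only [SimpleGraph.Walk.edges_cons, SimpleGraph.Walk.edges_nil, List.map_cons,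
            List.map_nil, Sym2.lift_mk]
          have : col aa s = 0 := by rw [colsymm aa s, ← hfsa]; exact eSf
          rw [e1, c2, this]; decide
        · have hgsa : g s ≠ aa := fun h => hsa (h ▸ hga)
          refine ⟨SimpleGraph.Walk.cons (hadj 3).symm (SimpleGraph.Walk.cons
            (hKadj hx₀ haK (Ne.symm hax)) (SimpleGraph.Walk.cons
            (hKadj haK hgK (Ne.symm hgsa)) (SimpleGraph.Walk.cons hga.symm
            SimpleGraph.Walk.nil))), ?_⟩
          rw [hcc]
          simp only [SimpleGraph.Walk.edges_cons, SimpleGraph.Walk.edges_nil, List.map_cons,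
            List.map_nil, Sym2.lift_mk]
          rw [e1, c2, c0 hgK hgx, colsymm (g s) s, eSg]; decide
  -- outside non-pendant to outside non-pendant
  have WSS : ∀ (s t : V), s ∉ K → (¬ ∃ i, s = y i) → t ∉ K → (¬ ∃ i, t = y i) →
      ∃ p : G.Walk s t, ((p.edges.map cc).Nodup) := by
    have ONE : ∀ (s t : V), s ∉ K → (¬ ∃ i, s = y i) → t ∉ K → (¬ ∃ i, t = y i) →
        G.Adj s x₀ → ∃ p : G.Walk s t, ((p.edges.map cc).Nodup) := by
      intro s t hs hsy ht hty hsx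
      obtain ⟨hfas, hgas, hfgnes, hfxs, hgx0s, hfa's⟩ := hfg s hs hsy
      obtain ⟨hfat, hgat, hfgnet, hfxt, hgx0t, hfa't⟩ := hfg t ht hty
      have hfKt : f t ∈ K := hsK ht hfat
      have hgKs : g s ∈ K := hsK hs hgas
      have eSx : col s x₀ = 1 := by
        have : col s (g s) = 1 := (cS hs hsy hgKs).2 (Ne.symm hfgnes)
        rwa [show g s = x₀ from hgx0s hsx] at this
      have eSft : col t (f t) = 0 := (cS ht hty hfKt).1 rfl
      refine ⟨SimpleGraph.Walk.cons hsx (SimpleGraph.Walk.cons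
        (hKadj hx₀ hfKt (Ne.symm hfxt)) (SimpleGraph.Walk.cons hfat.symm
        SimpleGraph.Walk.nil)), ?_⟩
      rw [hcc]
      simp only [SimpleGraph.Walk.edges_cons, SimpleGraph.Walk.edges_nil, List.map_cons,
        List.map_nil, Sym2.lift_mk]
      rw [eSx, colsymm (f t) t, eSft]
      rcases c23 hfKt with h | h <;> rw [h] <;> decide
    have TWO : ∀ (s t : V), s ∉ K → (¬ ∃ i, s = y i) → t ∉ K → (¬ ∃ i, t = y i) →
        ¬ G.Adj s x₀ → ¬ G.Adj t x₀ → G.Adj s aa →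
        ∃ p : G.Walk s t, ((p.edges.map cc).Nodup) := by
      intro s t hs hsy ht hty hsx htx hsa
      obtain ⟨hfas, hgas, hfgnes, hfxs, hgx0s, hfa's⟩ := hfg s hs hsy
      obtain ⟨hfat, hgat, hfgnet, hfxt, hgx0t, hfa't⟩ := hfg t ht hty
      have hfKs : f s ∈ K := hsK hs hfas
      have hgKs : g s ∈ K := hsK hs hgas
      have hfKt : f t ∈ K := hsK ht hfat
      have hgKt : g t ∈ K := hsK ht hgat
      have hgxs : g s ≠ x₀ := fun h => hsx (h ▸ hgas)
      have hgxt : g t ≠ x₀ := fun h => htx (h ▸ hgat)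
      have hfsa : f s = aa := hfa's hsa
      have eSfs : col s (f s) = 0 := (cS hs hsy hfKs).1 rfl
      have eSgs : col s (g s) = 1 := (cS hs hsy hgKs).2 (Ne.symm hfgnes)
      have eSft : col t (f t) = 0 := (cS ht hty hfKt).1 rfl
      have eSgt : col t (g t) = 1 := (cS ht hty hgKt).2 (Ne.symm hfgnet)
      by_cases hta : G.Adj t aa
      · -- s - g s - x₀ - aa - t
        have hfta : f t = aa := hfa't hta
        have hgsa : g s ≠ aa := fun h => hfgnes (show f s = g s by rw [hfsa, ← h])
        refine ⟨SimpleGraph.Walk.cons hgas (SimpleGraph.Walk.cons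
          (hKadj hgKs hx₀ hgxs) (SimpleGraph.Walk.cons (hKadj hx₀ haK (Ne.symm hax))
          (SimpleGraph.Walk.cons hta.symm SimpleGraph.Walk.nil))), ?_⟩
        rw [hcc]
        simp only [SimpleGraph.Walk.edges_cons, SimpleGraph.Walk.edges_nil, List.map_cons,
          List.map_nil, Sym2.lift_mk]
        have h1 : col (g s) x₀ = 3 := by rw [colsymm (g s) x₀]; exact c3 hgKs hgsa
        have h2 : col aa t = 0 := by rw [colsymm aa t, ← hfta]; exact eSft
        rw [eSgs, h1, c2, h2]; decide
      · -- s - aa - x₀ - g t - t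
        have hgta : g t ≠ aa := fun h => hta (h ▸ hgat)
        refine ⟨SimpleGraph.Walk.cons hsa (SimpleGraph.Walk.cons
          (hKadj haK hx₀ hax) (SimpleGraph.Walk.cons (hKadj hx₀ hgKt (Ne.symm hgxt))
          (SimpleGraph.Walk.cons hgat.symm SimpleGraph.Walk.nil))), ?_⟩
        rw [hcc]
        simp only [SimpleGraph.Walk.edges_cons, SimpleGraph.Walk.edges_nil, List.map_cons,
          List.map_nil, Sym2.lift_mk]
        have h1 : col s aa = 0 := by rw [← hfsa]; exact eSfs
        have h2 : col aa x₀ = 2 := by rw [colsymm aa x₀]; exact c2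
        rw [h1, h2, c3 hgKt hgta, colsymm (g t) t, eSgt]; decide
    intro s t hs hsy ht hty
    by_cases hsx : G.Adj s x₀
    · exact ONE s t hs hsy ht hty hsx
    · by_cases htx : G.Adj t x₀
      · exact symmW (ONE t s ht hty hs hsy htx)
      · by_cases hsa : G.Adj s aa
        · exact TWO s t hs hsy ht hty hsx htx hsa
        · by_cases hta : G.Adj t aa
          · exact symmW (TWO t s ht hty hs hsy htx hsx hta)
          · obtain ⟨hfas, hgas, hfgnes, hfxs, hgx0s, hfa's⟩ := hfg s hs hsy
            obtain ⟨hfat, hgat, hfgnet, hfxt, hgx0t, hfa't⟩ := hfg t ht hty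
            have hfKs : f s ∈ K := hsK hs hfas
            have hgKt : g t ∈ K := hsK ht hgat
            have hgxt : g t ≠ x₀ := fun h => htx (h ▸ hgat)
            have hfsa : f s ≠ aa := fun h => hsa (h ▸ hfas)
            have hgta : g t ≠ aa := fun h => hta (h ▸ hgat)
            have eSfs : col s (f s) = 0 := (cS hs hsy hfKs).1 rfl
            have eSgt : col t (g t) = 1 := (cS ht hty hgKt).2 (Ne.symm hfgnet)
            by_cases hfg' : f s = g t
            · refine ⟨SimpleGraph.Walk.cons hfas (SimpleGraph.Walk.cons
                (show G.Adj (f s) t by rw [hfg']; exact hgat.symm)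
                SimpleGraph.Walk.nil), ?_⟩
              rw [hcc]
              simp only [SimpleGraph.Walk.edges_cons, SimpleGraph.Walk.edges_nil, List.map_cons,
                List.map_nil, Sym2.lift_mk]
              have h2 : col (f s) t = 1 := by rw [colsymm (f s) t, hfg']; exact eSgt
              rw [eSfs, h2]; decide
            · refine ⟨SimpleGraph.Walk.cons hfas (SimpleGraph.Walk.cons
                (hKadj hfKs hgKt hfg') (SimpleGraph.Walk.cons hgat.symm
                SimpleGraph.Walk.nil)), ?_⟩
              rw [hcc]
              simp only [SimpleGraph.Walk.edges_cons, SimpleGraph.Walk.edges_nil, List.map_cons,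
                List.map_nil, Sym2.lift_mk]
              rw [eSfs, cInt hfKs hgKt hfxs hgxt hfsa hgta, colsymm (g t) t, eSgt]; decide
  -- all pairs
  have main : ∀ u v : V, ∃ p : G.Walk u v, ((p.edges.map cc).Nodup) := by
    intro u v
    by_cases hu : u ∈ K
    · by_cases hv : v ∈ K
      · by_cases huv : u = v
        · subst huv; exact ⟨SimpleGraph.Walk.nil, by simp⟩
        · exact ⟨SimpleGraph.Walk.cons (hKadj hu hv huv) SimpleGraph.Walk.nil, by simp⟩
      · by_cases hvy : ∃ i, v = y i
        · obtain ⟨i, rfl⟩ := hvy; exact symmW (WKY i u hu)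
        · exact symmW (WKS v u hv hvy hu)
    · by_cases huy : ∃ i, u = y i
      · obtain ⟨i, rfl⟩ := huy
        by_cases hv : v ∈ K
        · exact WKY i v hv
        · by_cases hvy : ∃ j, v = y j
          · obtain ⟨j, rfl⟩ := hvy; exact WYY i j
          · exact WYS i v hv hvy
      · by_cases hv : v ∈ K
        · exact WKS u v hu huy hv
        · by_cases hvy : ∃ j, v = y j
          · obtain ⟨j, rfl⟩ := hvy; exact symmW (WYS j u hu huy)
          · exact WSS u v hu huy hv hvy
  -- upper bound
  have hub : RainbowColorable G 4 := ⟨cc, fun e _ => hbound e, main⟩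
  -- lower bound
  have hfirstedge : ∀ (i : Fin 4) (u : V) (p : G.Walk (y i) u), y i ≠ u →
      s(y i, x₀) ∈ p.edges := by
    intro i u p hne
    cases p with
    | nil => exact absurd rfl hne
    | @cons _ w _ h q =>
      have hw : w = x₀ := hNy i w h
      rw [SimpleGraph.Walk.edges_cons]
      exact List.mem_cons.2 (Or.inl (by rw [hw]))
  have hlow : ∀ k, RainbowColorable G k → 4 ≤ k := by
    rintro k ⟨co, hco, hr⟩
    have hinj : Function.Injective (fun i : Fin 4 => co s(x₀, y i)) := by
      intro i j hij
      by_contra hne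
      have hyij : y i ≠ y j := fun h => hne (hyinj h)
      obtain ⟨p, hp⟩ := hr (y i) (y j)
      have h1 : s(y i, x₀) ∈ p.edges := hfirstedge i _ p hyij
      have h2 : s(y j, x₀) ∈ p.edges := by
        have := hfirstedge j _ p.reverse hyij.symm
        rwa [SimpleGraph.Walk.edges_reverse, List.mem_reverse] at this
      have heq : s(y i, x₀) = s(y j, x₀) := by
        refine List.inj_on_of_nodup_map hp h1 h2 ?_
        have e1 : s(y i, x₀) = s(x₀, y i) := Sym2.eq_swap
        have e2 : s(y j, x₀) = s(x₀, y j) := Sym2.eq_swap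
        rw [e1, e2]
        exact hij
      rw [Sym2.eq_iff] at heq
      rcases heq with ⟨h, -⟩ | ⟨h, -⟩
      · exact hyij h
      · exact (hadj i).ne' h
    have hsub : (Finset.univ.image fun i : Fin 4 => co s(x₀, y i)) ⊆ Finset.range k := by
      intro n hn
      simp only [Finset.mem_image, Finset.mem_univ, true_and] at hn
      obtain ⟨i, rfl⟩ := hn
      exact Finset.mem_range.2 (hco _ ((SimpleGraph.mem_edgeSet G).2 (hadj i)))
    have hle := Finset.card_le_card hsub
    rwa [Finset.card_image_of_injective _ hinj, Finset.card_univ, Fintype.card_fin,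
      Finset.card_range] at hle
  -- conclusion
  have h4 : (4 : ℕ) ∈ {k | RainbowColorable G k} := hub
  refine le_antisymm (Nat.sInf_le h4) (le_csInf ⟨4, h4⟩ fun k hk => hlow k hk)
end

section
/- Let B be a finite family of n-dimensional axis-aligned boxes, each with side length 1 or 1/2 in every dimension. If for each box b one denotes by S(b) ⊆ [n] the set of dimensions where b has side 1/2, then B can be packed without rotation into the n-dimensional unit cube if and only if there exist functions f_b : S(b) → {0, 1/2} for each b ∈ B such that for any two distinct boxes b, b' there exists a dimension k ∈ S(b) ∩ S(b') with f_b(k) ≠ f_{b'}(k). -/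
open SimpleGraph Finset

/-- The open interior of the axis-aligned box with corner `x` and side lengths `s`. -/
def openBox {n : ℕ} (x s : Fin n → ℝ) : Set (Fin n → ℝ) :=
  Set.univ.pi fun k => Set.Ioo (x k) (x k + s k)

/-- A finite family of `n`-dimensional boxes with all sides `1` or `1/2` can be packed
without rotation into the unit cube iff each box `b` can be assigned offsets
`f b : S(b) → {0, 1/2}` on its half-side dimensions such that any two distinct boxes
disagree in a dimension where both have side `1/2`. -/
theorem stmt14 {ι : Type*} [Finite ι] {n : ℕ} (s : ι → Fin n → ℝ)
    (hs : ∀ b k, s b k = 1 / 2 ∨ s b k = 1) :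
    (∃ x : ι → Fin n → ℝ,
        (∀ b k, 0 ≤ x b k ∧ x b k + s b k ≤ 1) ∧
        ∀ b b', b ≠ b' →
          Disjoint (openBox (x b) (s b)) (openBox (x b') (s b'))) ↔
    (∃ f : ι → Fin n → ℝ, (∀ b k, f b k = 0 ∨ f b k = 1 / 2) ∧
        ∀ b b', b ≠ b' →
          ∃ k, s b k = 1 / 2 ∧ s b' k = 1 / 2 ∧ f b k ≠ f b' k) := by
  have hspos : ∀ b k, (0:ℝ) < s b k := by
    intro b k; rcases hs b k with h | h <;> rw [h] <;> norm_num
  constructor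
  · rintro ⟨x, hx, hdisj⟩
    refine ⟨fun b k => if x b k < 1/2 then 0 else 1/2, fun b k => ?_, ?_⟩
    · dsimp only; split
      · exact Or.inl rfl
      · exact Or.inr rfl
    intro b b' hbb
    have hd := hdisj b b' hbb
    have hsep : ∃ k, x b' k + s b' k ≤ x b k ∨ x b k + s b k ≤ x b' k := by
      by_contra hcon
      push_neg at hcon
      set y : Fin n → ℝ := fun k =>
        (max (x b k) (x b' k) + min (x b k + s b k) (x b' k + s b' k)) / 2 with hy
      have hlt : ∀ k, max (x b k) (x b' k)
          < min (x b k + s b k) (x b' k + s b' k) := by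
        intro k
        have h1 := (hcon k).1
        have h2 := (hcon k).2
        have p1 := hspos b k
        have p2 := hspos b' k
        rcases max_cases (x b k) (x b' k) with ⟨he, _⟩ | ⟨he, _⟩ <;>
          rcases min_cases (x b k + s b k) (x b' k + s b' k) with ⟨he2, _⟩ | ⟨he2, _⟩ <;>
          rw [he, he2] <;> linarith
      have h1 : y ∈ openBox (x b) (s b) := by
        intro k _
        have := hlt k
        constructor
        · have : x b k ≤ max (x b k) (x b' k) := le_max_left _ _
          simp only [hy]; linarith [hlt k]
        · have : min (x b k + s b k) (x b' k + s b' k) ≤ x b k + s b k := min_le_left _ _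
          simp only [hy]; linarith [hlt k]
      have h2 : y ∈ openBox (x b') (s b') := by
        intro k _
        constructor
        · have : x b' k ≤ max (x b k) (x b' k) := le_max_right _ _
          simp only [hy]; linarith [hlt k]
        · have : min (x b k + s b k) (x b' k + s b' k) ≤ x b' k + s b' k := min_le_right _ _
          simp only [hy]; linarith [hlt k]
      exact Set.not_disjoint_iff.mpr ⟨y, h1, h2⟩ hd
    obtain ⟨k, hk⟩ := hsep
    have hxb := hx b k
    have hxb' := hx b' k
    have hsb : s b k = 1/2 := by
      rcases hs b k with h | h
      · exact h
      · exfalso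
        rcases hk with hk | hk
        · have := hspos b' k; linarith
        · have := hspos b' k; linarith
    have hsb' : s b' k = 1/2 := by
      rcases hs b' k with h | h
      · exact h
      · exfalso
        rcases hk with hk | hk
        · have := hspos b k; linarith
        · have := hspos b k; linarith
    refine ⟨k, hsb, hsb', ?_⟩
    rw [hsb] at hxb hk
    rw [hsb'] at hxb' hk
    dsimp only
    rcases hk with hk | hk
    · have h1 : ¬ x b k < 1/2 := by linarith
      have h2 : x b' k < 1/2 := by linarith
      rw [if_neg h1, if_pos h2]; norm_num
    · have h1 : x b k < 1/2 := by linarith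
      have h2 : ¬ x b' k < 1/2 := by linarith
      rw [if_pos h1, if_neg h2]; norm_num
  · rintro ⟨f, hf, hsep⟩
    refine ⟨fun b k => if s b k = 1 then 0 else f b k, fun b k => ?_, ?_⟩
    · dsimp only; split
      · constructor
        · norm_num
        · rename_i h; rw [h]; norm_num
      · rename_i h
        have hsk : s b k = 1/2 := (hs b k).resolve_right h
        rcases hf b k with hfk | hfk <;> rw [hfk, hsk] <;> norm_num
    intro b b' hbb
    obtain ⟨k, h1, h2, hne⟩ := hsep b b' hbb
    have hn1 : s b k ≠ 1 := by rw [h1]; norm_num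
    have hn2 : s b' k ≠ 1 := by rw [h2]; norm_num
    rw [Set.disjoint_left]
    intro y hy hy'
    have hyk := hy k (Set.mem_univ k)
    have hyk' := hy' k (Set.mem_univ k)
    dsimp only at hyk hyk'
    rw [if_neg hn1] at hyk
    rw [if_neg hn2] at hyk'
    rw [h1] at hyk; rw [h2] at hyk'
    rcases hf b k with e1 | e1 <;> rcases hf b' k with e2 | e2
    · exact hne (e1.trans e2.symm)
    · rw [e1] at hyk; rw [e2] at hyk'
      rcases hyk with ⟨_, u1⟩; rcases hyk' with ⟨u2, _⟩; linarith
    · rw [e1] at hyk; rw [e2] at hyk'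
      rcases hyk with ⟨u1, _⟩; rcases hyk' with ⟨_, u2⟩; linarith
    · exact hne (e1.trans e2.symm)
end

section
/- Let T be a threshold graph with maximum independent set I such that every vertex of I has all its neighbours in the clique V(T) \ I, and the neighbourhoods of vertices of I are totally ordered by inclusion. If the degrees d(v) of vertices v ∈ I satisfy Kraft's inequality ∑_{v ∈ I} 2^{−d(v)} ≤ 1, then T can be rainbow coloured using 2 colours. -/
open SimpleGraph Finset

namespace Stmt15Aux

noncomputable def rbit (j : ℕ) (x : ℝ) : ℕ := (⌊x * 2 ^ (j + 1)⌋).toNat % 2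

lemma rbit_lt_two (j : ℕ) (x : ℝ) : rbit j x < 2 := Nat.mod_lt _ (by norm_num)

lemma floor_two_mul (x : ℝ) : ⌊(2 : ℝ) * x⌋ = 2 * ⌊x⌋ ∨ ⌊(2 : ℝ) * x⌋ = 2 * ⌊x⌋ + 1 := by
  have h1 : (2 : ℤ) * ⌊x⌋ ≤ ⌊2 * x⌋ := by
    apply Int.le_floor.2; push_cast; linarith [Int.floor_le x]
  have h2 : ⌊(2 : ℝ) * x⌋ < 2 * ⌊x⌋ + 2 := by
    apply Int.floor_lt.2; push_cast; linarith [Int.lt_floor_add_one x]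
  omega

lemma floor_agree {a b : ℝ} (ha : 0 ≤ a) (ha1 : a < 1) (hb : 0 ≤ b) (hb1 : b < 1)
    (m : ℕ) (h : ∀ j < m, rbit j a = rbit j b) : ⌊a * 2 ^ m⌋ = ⌊b * 2 ^ m⌋ := by
  induction m with
  | zero =>
      simp only [pow_zero, mul_one]
      rw [Int.floor_eq_zero_iff.2 ⟨ha, ha1⟩, Int.floor_eq_zero_iff.2 ⟨hb, hb1⟩]
  | succ m ih =>
      have hm : ⌊a * 2 ^ m⌋ = ⌊b * 2 ^ m⌋ := ih (fun j hj => h j (by omega))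
      have hA : ⌊a * 2 ^ (m + 1)⌋ = 2 * ⌊a * 2 ^ m⌋ ∨
          ⌊a * 2 ^ (m + 1)⌋ = 2 * ⌊a * 2 ^ m⌋ + 1 := by
        rw [show a * 2 ^ (m + 1) = 2 * (a * 2 ^ m) by ring]; exact floor_two_mul _
      have hB : ⌊b * 2 ^ (m + 1)⌋ = 2 * ⌊b * 2 ^ m⌋ ∨
          ⌊b * 2 ^ (m + 1)⌋ = 2 * ⌊b * 2 ^ m⌋ + 1 := by
        rw [show b * 2 ^ (m + 1) = 2 * (b * 2 ^ m) by ring]; exact floor_two_mul _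
      have hbit := h m (by omega)
      rw [rbit, rbit] at hbit
      have hA0 : (0 : ℤ) ≤ ⌊a * 2 ^ (m + 1)⌋ := Int.floor_nonneg.2 (by positivity)
      have hB0 : (0 : ℤ) ≤ ⌊b * 2 ^ (m + 1)⌋ := Int.floor_nonneg.2 (by positivity)
      omega

lemma bits_differ {a b : ℝ} {da db : ℕ} {ka kb : ℕ}
    (ha0 : 0 ≤ a) (hb1 : b < 1) (hka : a * 2 ^ da = ka) (hkb : b * 2 ^ db = kb)
    (hab : a + (1 / 2) ^ da ≤ b) :
    ∃ j, j < da ∧ j < db ∧ rbit j a ≠ rbit j b := by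
  by_contra hcon
  push_neg at hcon
  have hpowa : (0 : ℝ) < (1 / 2 : ℝ) ^ da := by positivity
  have hb0 : 0 ≤ b := le_trans (by positivity) hab
  have ha1 : a < 1 := by linarith
  have hpm : ((1 : ℝ) / 2) ^ da * 2 ^ da = 1 := by
    rw [← mul_pow]; norm_num
  rcases le_total da db with hd | hd
  · have hfl := floor_agree ha0 ha1 hb0 hb1 da
      (fun j hj => hcon j hj (lt_of_lt_of_le hj hd))
    have h1 : ⌊a * 2 ^ da⌋ = (ka : ℤ) := by rw [hka]; exact Int.floor_natCast ka
    have h2 : b * 2 ^ da < (ka : ℝ) + 1 := by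
      have h := Int.lt_floor_add_one (b * 2 ^ da)
      rw [← hfl, h1] at h; exact_mod_cast h
    have h3 : (a + (1 / 2) ^ da) * 2 ^ da ≤ b * 2 ^ da :=
      mul_le_mul_of_nonneg_right hab (by positivity)
    nlinarith
  · have hfl := floor_agree ha0 ha1 hb0 hb1 db
      (fun j hj => hcon j (lt_of_lt_of_le hj hd) hj)
    have h1 : ⌊b * 2 ^ db⌋ = (kb : ℤ) := by rw [hkb]; exact Int.floor_natCast kb
    have h2 : (kb : ℝ) ≤ a * 2 ^ db := by
      have h := Int.floor_le (a * 2 ^ db)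
      rw [hfl, h1] at h; exact_mod_cast h
    have h3 : a * 2 ^ db < b * 2 ^ db := by
      have : a < b := by linarith
      exact mul_lt_mul_of_pos_right this (by positivity)
    rw [hkb] at h3
    linarith

lemma floor_ge_of_bits_one {a : ℝ} (ha : 0 ≤ a) (d : ℕ) (h : ∀ j < d, rbit j a = 1) :
    (2 : ℤ) ^ d - 1 ≤ ⌊a * 2 ^ d⌋ := by
  induction d with
  | zero => simpa using Int.floor_nonneg.2 ha
  | succ m ih =>
      have h1 := ih (fun j hj => h j (by omega))
      have hbit := h m (by omega)
      rw [rbit] at hbit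
      have hA : ⌊a * 2 ^ (m + 1)⌋ = 2 * ⌊a * 2 ^ m⌋ ∨
          ⌊a * 2 ^ (m + 1)⌋ = 2 * ⌊a * 2 ^ m⌋ + 1 := by
        rw [show a * 2 ^ (m + 1) = 2 * (a * 2 ^ m) by ring]; exact floor_two_mul _
      have h0 : (0 : ℤ) ≤ ⌊a * 2 ^ (m + 1)⌋ := Int.floor_nonneg.2 (by positivity)
      have hodd : ⌊a * 2 ^ (m + 1)⌋ = 2 * ⌊a * 2 ^ m⌋ + 1 := by omega
      have hps : (2 : ℤ) ^ (m + 1) = 2 * 2 ^ m := by ring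
      omega

lemma exists_zero_bit {a : ℝ} {d k : ℕ} (ha0 : 0 ≤ a) (hk : a * 2 ^ d = k)
    (h1 : a + (1 / 2) ^ d < 1) : ∃ j, j < d ∧ rbit j a = 0 := by
  by_contra h
  push_neg at h
  have h' : ∀ j < d, rbit j a = 1 := fun j hj => by
    have h2 := rbit_lt_two j a
    have h3 := h j hj
    omega
  have hfl := floor_ge_of_bits_one ha0 d h'
  have hle : ((2 : ℝ) ^ d - 1 : ℝ) ≤ a * 2 ^ d := by
    have h4 : ((2 : ℤ) ^ d - 1 : ℝ) ≤ (⌊a * 2 ^ d⌋ : ℝ) := by exact_mod_cast hfl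
    have h5 := Int.floor_le (a * 2 ^ d)
    push_cast at h4
    linarith
  have hpm : ((1 : ℝ) / 2) ^ d * 2 ^ d = 1 := by rw [← mul_pow]; norm_num
  have h6 : (a + (1 / 2) ^ d) * 2 ^ d < 1 * 2 ^ d :=
    mul_lt_mul_of_pos_right h1 (by positivity)
  nlinarith



lemma exists_rank {V : Type*} [Fintype V] (G : SimpleGraph V) [DecidableRel G.Adj]
    (I : Finset V)
    (hnbr : ∀ v ∈ I, G.neighborSet v ⊆ (↑I : Set V)ᶜ)
    (hchain : ∀ u ∈ I, ∀ v ∈ I,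
      G.neighborSet u ⊆ G.neighborSet v ∨ G.neighborSet v ⊆ G.neighborSet u) :
    ∃ g : V → ℕ,
      (∀ u ∈ I, ∀ x, x ∉ I → (G.Adj u x ↔ g x < G.degree u)) ∧
      (∀ u ∈ I, ∀ j < G.degree u, ∃ y, y ∉ I ∧ G.Adj u y ∧ g y = j) := by
  classical
  obtain ⟨e, he⟩ : ∃ f : V → ℕ, Function.Injective f :=
    ⟨fun v => (Fintype.equivFin V v : ℕ),
      Fin.val_injective.comp (Fintype.equivFin V).injective⟩
  set A : V → Finset V := fun x => I.filter fun u => G.Adj u x with hA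
  have hmemA : ∀ x u, u ∈ A x ↔ u ∈ I ∧ G.Adj u x := by
    intro x u; simp [hA]
  have hAcomp : ∀ x y, A x ⊆ A y ∨ A y ⊆ A x := by
    intro x y
    by_contra hcon
    push_neg at hcon
    obtain ⟨⟨u, hu, hu'⟩, v, hv, hv'⟩ :
        (∃ u ∈ A x, u ∉ A y) ∧ ∃ v ∈ A y, v ∉ A x := by
      constructor
      · exact Finset.not_subset.1 hcon.1
      · exact Finset.not_subset.1 hcon.2
    rw [hmemA] at hu hv
    rcases hchain u hu.1 v hv.1 with hss | hss
    · exact hv' ((hmemA x v).2 ⟨hv.1, hss hu.2⟩)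
    · exact hu' ((hmemA y u).2 ⟨hu.1, hss hv.2⟩)
  set R : V → V → Prop := fun y x => A x ⊂ A y ∨ (A y = A x ∧ e y < e x) with hR
  have hRirr : ∀ x, ¬ R x x := by
    intro x h
    rcases h with h | h
    · exact (lt_irrefl _ h)
    · exact (lt_irrefl _ h.2)
  have hRtrans : ∀ x y z, R x y → R y z → R x z := by
    intro x y z h1 h2
    rcases h1 with h1 | h1 <;> rcases h2 with h2 | h2
    · exact Or.inl (lt_trans h2 h1)
    · exact Or.inl (h2.1 ▸ h1)
    · exact Or.inl (h1.1 ▸ h2)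
    · exact Or.inr ⟨h1.1.trans h2.1, lt_trans h1.2 h2.2⟩
  have hRtot : ∀ x y, x ≠ y → R x y ∨ R y x := by
    intro x y hxy
    rcases hAcomp x y with h | h
    · rcases eq_or_ne (A x) (A y) with he' | hne
      · rcases lt_or_gt_of_ne (fun h' => hxy (he h')) with h' | h'
        · exact Or.inl (Or.inr ⟨he', h'⟩)
        · exact Or.inr (Or.inr ⟨he'.symm, h'⟩)
      · exact Or.inr (Or.inl ⟨h, fun hle => hne (Finset.Subset.antisymm h hle)⟩)
    · rcases eq_or_ne (A x) (A y) with he' | hne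
      · rcases lt_or_gt_of_ne (fun h' => hxy (he h')) with h' | h'
        · exact Or.inl (Or.inr ⟨he', h'⟩)
        · exact Or.inr (Or.inr ⟨he'.symm, h'⟩)
      · exact Or.inl (Or.inl ⟨h, fun hle => hne (Finset.Subset.antisymm hle h)⟩)
  set g : V → ℕ := fun x => (univ.filter fun y => y ∉ I ∧ R y x).card with hg
  -- upper bound: adjacency implies g x < degree
  have hub : ∀ u ∈ I, ∀ x, x ∉ I → G.Adj u x → g x < G.degree u := by
    intro u hu x hx hadj
    have hsub : insert x (univ.filter fun y => y ∉ I ∧ R y x) ⊆ G.neighborFinset u := by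
      intro z hz
      rw [Finset.mem_insert] at hz
      rw [SimpleGraph.mem_neighborFinset]
      rcases hz with rfl | hz
      · exact hadj
      · rw [Finset.mem_filter] at hz
        rcases hz.2.2 with h | h
        · have : u ∈ A z := h.subset ((hmemA x u).2 ⟨hu, hadj⟩)
          exact ((hmemA z u).1 this).2
        · have : u ∈ A z := h.1 ▸ (hmemA x u).2 ⟨hu, hadj⟩
          exact ((hmemA z u).1 this).2
    have hxmem : x ∉ (univ.filter fun y => y ∉ I ∧ R y x) := by
      simp only [Finset.mem_filter]
      intro h
      exact hRirr x h.2.2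
    have := Finset.card_le_card hsub
    rw [Finset.card_insert_of_notMem hxmem] at this
    rw [← SimpleGraph.card_neighborFinset_eq_degree]
    simp only [hg]
    omega
  -- lower bound
  have hlb : ∀ u ∈ I, ∀ x, x ∉ I → ¬ G.Adj u x → G.degree u ≤ g x := by
    intro u hu x hx hadj
    have hsub : G.neighborFinset u ⊆ (univ.filter fun y => y ∉ I ∧ R y x) := by
      intro z hz
      rw [SimpleGraph.mem_neighborFinset] at hz
      have hzI : z ∉ I := by
        have := hnbr u hu hz
        simpa using this
      rw [Finset.mem_filter]
      refine ⟨Finset.mem_univ _, hzI, ?_⟩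
      have huz : u ∈ A z := (hmemA z u).2 ⟨hu, hz⟩
      have hux : u ∉ A x := fun h => hadj ((hmemA x u).1 h).2
      rcases hAcomp x z with h | h
      · exact Or.inl ⟨h, fun hle => hux (hle huz)⟩
      · exact absurd (h huz) hux
    have := Finset.card_le_card hsub
    rw [← SimpleGraph.card_neighborFinset_eq_degree]
    simpa only [hg] using this
  have hiff : ∀ u ∈ I, ∀ x, x ∉ I → (G.Adj u x ↔ g x < G.degree u) := by
    intro u hu x hx
    constructor
    · exact hub u hu x hx
    · intro h
      by_contra hadj
      have := hlb u hu x hx hadj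
      omega
  refine ⟨g, hiff, ?_⟩
  -- injectivity of g on the complement of I
  have hmono : ∀ x, x ∉ I → ∀ y, y ∉ I → R x y → g x < g y := by
    intro x hx y hy hxy
    have hsub : insert x (univ.filter fun z => z ∉ I ∧ R z x) ⊆
        (univ.filter fun z => z ∉ I ∧ R z y) := by
      intro z hz
      rw [Finset.mem_insert] at hz
      rw [Finset.mem_filter]
      rcases hz with rfl | hz
      · exact ⟨Finset.mem_univ _, hx, hxy⟩
      · rw [Finset.mem_filter] at hz
        exact ⟨Finset.mem_univ _, hz.2.1, hRtrans z x y hz.2.2 hxy⟩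
    have hxmem : x ∉ (univ.filter fun z => z ∉ I ∧ R z x) := by
      simp only [Finset.mem_filter]
      intro h
      exact hRirr x h.2.2
    have := Finset.card_le_card hsub
    rw [Finset.card_insert_of_notMem hxmem] at this
    simp only [hg]
    omega
  have hinj : ∀ x, x ∉ I → ∀ y, y ∉ I → x ≠ y → g x ≠ g y := by
    intro x hx y hy hxy
    rcases hRtot x y hxy with h | h
    · exact Nat.ne_of_lt (hmono x hx y hy h)
    · exact (Nat.ne_of_lt (hmono y hy x hx h)).symm
  -- surjectivity onto initial segments
  intro u hu j hj
  have hnb : ∀ z ∈ G.neighborFinset u, z ∉ I := by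
    intro z hz
    rw [SimpleGraph.mem_neighborFinset] at hz
    have := hnbr u hu hz
    simpa using this
  have hinjOn : Set.InjOn g ↑(G.neighborFinset u) := by
    intro x hx y hy hxy
    by_contra hne
    exact hinj x (hnb x hx) y (hnb y hy) hne hxy
  have hcard : ((G.neighborFinset u).image g).card = G.degree u := by
    rw [Finset.card_image_of_injOn hinjOn, SimpleGraph.card_neighborFinset_eq_degree]
  have hsubr : (G.neighborFinset u).image g ⊆ Finset.range (G.degree u) := by
    intro m hm
    rw [Finset.mem_image] at hm
    obtain ⟨y, hy, rfl⟩ := hm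
    rw [Finset.mem_range]
    exact hub u hu y (hnb y hy) ((SimpleGraph.mem_neighborFinset _ _ _).1 hy)
  have heq : (G.neighborFinset u).image g = Finset.range (G.degree u) :=
    Finset.eq_of_subset_of_card_le hsubr (by rw [Finset.card_range, hcard])
  have : j ∈ (G.neighborFinset u).image g := by
    rw [heq, Finset.mem_range]; exact hj
  rw [Finset.mem_image] at this
  obtain ⟨y, hy, hgy⟩ := this
  exact ⟨y, hnb y hy, (SimpleGraph.mem_neighborFinset _ _ _).1 hy, hgy⟩



lemma exists_code {V : Type*} [Fintype V] (G : SimpleGraph V) [DecidableRel G.Adj]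
    (I : Finset V)
    (hkraft : ∑ v ∈ I, ((1 : ℝ) / 2) ^ G.degree v ≤ 1) :
    ∃ a : V → ℝ,
      (∀ u ∈ I, 0 ≤ a u ∧ a u + (1 / 2) ^ G.degree u ≤ 1 ∧
        ∃ k : ℕ, a u * 2 ^ G.degree u = k) ∧
      (∀ u ∈ I, ∀ v ∈ I, u ≠ v →
        a u + (1 / 2) ^ G.degree u ≤ a v ∨ a v + (1 / 2) ^ G.degree v ≤ a u) ∧
      (∀ u ∈ I, a u + (1 / 2) ^ G.degree u = 1 → ∀ v ∈ I, G.degree v ≤ G.degree u) := by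
  classical
  obtain ⟨e, he⟩ : ∃ f : V → ℕ, Function.Injective f :=
    ⟨fun v => (Fintype.equivFin V v : ℕ),
      Fin.val_injective.comp (Fintype.equivFin V).injective⟩
  set P : V → V → Prop := fun u v =>
    G.degree u < G.degree v ∨ (G.degree u = G.degree v ∧ e u < e v) with hP
  have hPirr : ∀ u, ¬ P u u := by
    intro u h
    rcases h with h | h
    · exact lt_irrefl _ h
    · exact lt_irrefl _ h.2
  have hPtrans : ∀ u v w, P u v → P v w → P u w := by
    intro u v w h1 h2
    rcases h1 with h1 | h1 <;> rcases h2 with h2 | h2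
    · exact Or.inl (lt_trans h1 h2)
    · exact Or.inl (h2.1 ▸ h1)
    · exact Or.inl (h1.1 ▸ h2)
    · exact Or.inr ⟨h1.1.trans h2.1, lt_trans h1.2 h2.2⟩
  have hPtot : ∀ u v, u ≠ v → P u v ∨ P v u := by
    intro u v huv
    rcases Nat.lt_trichotomy (G.degree u) (G.degree v) with h | h | h
    · exact Or.inl (Or.inl h)
    · rcases lt_or_gt_of_ne (fun h' => huv (he h')) with h' | h'
      · exact Or.inl (Or.inr ⟨h, h'⟩)
      · exact Or.inr (Or.inr ⟨h.symm, h'⟩)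
    · exact Or.inr (Or.inl h)
  set a : V → ℝ := fun v => ∑ u ∈ I.filter (fun u => P u v), ((1 : ℝ) / 2) ^ G.degree u
    with ha
  have hterm : ∀ w : V, (0:ℝ) < ((1 : ℝ) / 2) ^ G.degree w := fun w => by positivity
  have hins : ∀ v ∈ I, a v + (1 / 2) ^ G.degree v
      = ∑ u ∈ insert v (I.filter (fun u => P u v)), ((1 : ℝ) / 2) ^ G.degree u := by
    intro v hv
    rw [Finset.sum_insert (by simp only [Finset.mem_filter]; exact fun h => hPirr v h.2)]
    simp only [ha]
    ring
  have hsubI : ∀ v ∈ I, insert v (I.filter (fun u => P u v)) ⊆ I := by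
    intro v hv z hz
    rw [Finset.mem_insert] at hz
    rcases hz with rfl | hz
    · exact hv
    · exact (Finset.mem_filter.1 hz).1
  have hbound : ∀ v ∈ I, a v + (1 / 2) ^ G.degree v ≤ 1 := by
    intro v hv
    rw [hins v hv]
    refine le_trans (Finset.sum_le_sum_of_subset_of_nonneg (hsubI v hv)
      (fun w _ _ => le_of_lt (hterm w))) hkraft
  refine ⟨a, ?_, ?_, ?_⟩
  · intro u hu
    refine ⟨Finset.sum_nonneg fun w _ => le_of_lt (hterm w), hbound u hu, ?_⟩
    refine ⟨∑ w ∈ I.filter (fun w => P w u), 2 ^ (G.degree u - G.degree w), ?_⟩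
    push_cast
    rw [ha]
    simp only
    rw [Finset.sum_mul]
    refine Finset.sum_congr rfl (fun w hw => ?_)
    have hdw : G.degree w ≤ G.degree u := by
      rcases (Finset.mem_filter.1 hw).2 with h | h
      · exact le_of_lt h
      · exact le_of_eq h.1
    have hsplit : G.degree u = (G.degree u - G.degree w) + G.degree w := by omega
    rw [hsplit, pow_add,
      show ((1:ℝ)/2) ^ G.degree w * ((2:ℝ) ^ (G.degree u - G.degree w) * 2 ^ G.degree w)
        = (2:ℝ) ^ (G.degree u - G.degree w) * (((1:ℝ)/2) * 2) ^ G.degree w by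
          rw [mul_pow]; ring]
    norm_num
  · intro u hu v hv huv
    have key : ∀ x ∈ I, ∀ y ∈ I, P x y → a x + (1 / 2) ^ G.degree x ≤ a y := by
      intro x hx y hy hxy
      rw [hins x hx]
      refine Finset.sum_le_sum_of_subset_of_nonneg ?_ (fun w _ _ => le_of_lt (hterm w))
      intro z hz
      rw [Finset.mem_insert] at hz
      rw [Finset.mem_filter]
      rcases hz with rfl | hz
      · exact ⟨hx, hxy⟩
      · rw [Finset.mem_filter] at hz
        exact ⟨hz.1, hPtrans z x y hz.2 hxy⟩
    rcases hPtot u v huv with h | h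
    · exact Or.inl (key u hu v hv h)
    · exact Or.inr (key v hv u hu h)
  · intro u hu htop v hv
    by_contra hdeg
    push_neg at hdeg
    have hvmem : v ∉ insert u (I.filter (fun w => P w u)) := by
      rw [Finset.mem_insert]
      rintro (rfl | hmem)
      · exact lt_irrefl _ hdeg
      · rcases (Finset.mem_filter.1 hmem).2 with h | h
        · omega
        · omega
    have hsum := Finset.sum_sdiff (hsubI u hu)
      (f := fun w => ((1:ℝ)/2) ^ G.degree w)
    have hpos : 0 < ∑ w ∈ I \ insert u (I.filter (fun w => P w u)),
        ((1:ℝ)/2) ^ G.degree w :=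
      Finset.sum_pos (fun w _ => hterm w) ⟨v, Finset.mem_sdiff.2 ⟨hv, hvmem⟩⟩
    rw [hins u hu] at htop
    linarith [hkraft, hsum ▸ (by linarith : (1:ℝ) + 0 < ∑ w ∈ I \ insert u (I.filter (fun w => P w u)), ((1:ℝ)/2) ^ G.degree w + ∑ w ∈ insert u (I.filter (fun w => P w u)), ((1:ℝ)/2) ^ G.degree w)]

end Stmt15Aux

open Stmt15Aux in
/-- A threshold graph whose maximum independent set `I` (with all neighbours of `I` in the
complementary clique and neighbourhoods of `I` totally ordered by inclusion) satisfies
Kraft's inequality can be rainbow coloured with two colours. -/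
theorem stmt15 {V : Type*} [Fintype V] (G : SimpleGraph V) [DecidableRel G.Adj]
    (hthresh : ∃ (w : V → ℝ) (t : ℝ), ∀ u v : V, u ≠ v → (G.Adj u v ↔ t ≤ w u + w v))
    (I : Finset V) (hI : IsIndepSet' G ↑I)
    (hmax : ∀ J : Finset V, IsIndepSet' G ↑J → J.card ≤ I.card)
    (hnbr : ∀ v ∈ I, G.neighborSet v ⊆ (↑I : Set V)ᶜ)
    (hclique : G.IsClique ((↑I : Set V)ᶜ))
    (hchain : ∀ u ∈ I, ∀ v ∈ I,
      G.neighborSet u ⊆ G.neighborSet v ∨ G.neighborSet v ⊆ G.neighborSet u)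
    (hkraft : ∑ v ∈ I, ((1 : ℝ) / 2) ^ G.degree v ≤ 1) :
    RainbowColorable G 2 := by
  classical
  obtain ⟨g, hg_iff, hg_surj⟩ := exists_rank G I hnbr hchain
  obtain ⟨a, ha_basic, ha_sep, ha_max⟩ := exists_code G I hkraft
  -- the colouring
  obtain ⟨c, hc1, hc2, hcb⟩ :
      ∃ c : Sym2 V → ℕ,
        (∀ x y, x ∈ I → y ∉ I → c s(x, y) = rbit (g y) (a x)) ∧
        (∀ x y, x ∉ I → y ∉ I → c s(x, y) = 1) ∧
        (∀ e, c e < 2) := by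
    refine ⟨Sym2.lift ⟨fun u v =>
      if u ∈ I then (if v ∈ I then 0 else rbit (g v) (a u))
      else (if v ∈ I then rbit (g u) (a v) else 1), ?_⟩, ?_, ?_, ?_⟩
    · intro u v
      by_cases hu : u ∈ I <;> by_cases hv : v ∈ I <;> simp [hu, hv]
    · intro x y hx hy
      simp [Sym2.lift_mk, hx, hy]
    · intro x y hx hy
      simp [Sym2.lift_mk, hx, hy]
    · intro e
      induction e using Sym2.ind with
      | _ x y =>
        simp only [Sym2.lift_mk]
        split_ifs
        · norm_num
        · exact rbit_lt_two _ _
        · exact rbit_lt_two _ _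
        · norm_num
  have hcomm : ∀ x y : V, c s(x, y) = c s(y, x) := fun x y => by rw [Sym2.eq_swap]
  -- helper walks
  have key1 : ∀ x y : V, G.Adj x y → ∃ p : G.Walk x y, (p.edges.map c).Nodup := by
    intro x y h
    exact ⟨Walk.cons h Walk.nil, by simp⟩
  have key2 : ∀ x y z : V, G.Adj x y → G.Adj y z → c s(x, y) ≠ c s(y, z) →
      ∃ p : G.Walk x z, (p.edges.map c).Nodup := by
    intro x y z h1 h2 hne
    exact ⟨Walk.cons h1 (Walk.cons h2 Walk.nil), by simp [hne]⟩
  -- maximality: every vertex outside I has a neighbour in I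
  have hM : ∀ x, x ∉ I → ∃ w ∈ I, G.Adj w x := by
    intro x hx
    by_contra hcon
    push_neg at hcon
    have hind : IsIndepSet' G ↑(insert x I) := by
      intro p hp q hq
      simp only [Finset.coe_insert, Set.mem_insert_iff, Finset.mem_coe] at hp hq
      rcases hp with rfl | hp <;> rcases hq with rfl | hq
      · simp
      · intro h; exact hcon q hq h.symm
      · intro h; exact hcon p hp h
      · exact hI p hp q hq
    have := hmax _ hind
    rw [Finset.card_insert_of_notMem hx] at this
    omega
  -- main asymmetric case : u ∈ I, v ∉ I, u ≠ v
  have main : ∀ u v : V, u ∈ I → v ∉ I →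
      ∃ p : G.Walk u v, (p.edges.map c).Nodup := by
    intro u v hu hv
    by_cases hadj : G.Adj u v
    · exact key1 u v hadj
    · obtain ⟨ha0u, hble, ku, hku⟩ := ha_basic u hu
      have hlt : a u + (1 / 2) ^ G.degree u < 1 := by
        rcases lt_or_eq_of_le hble with h | h
        · exact h
        · exfalso
          have hdmax := ha_max u hu h
          obtain ⟨w, hwI, hwadj⟩ := hM v hv
          have hwv : v ∈ G.neighborSet w := hwadj
          rcases hchain w hwI u hu with hss | hss
          · exact hadj (hss hwv)
          · have hfs : G.neighborFinset u ⊆ G.neighborFinset w := by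
              intro z hz
              rw [SimpleGraph.mem_neighborFinset] at hz ⊢
              exact hss hz
            have hcard : (G.neighborFinset w).card ≤ (G.neighborFinset u).card := by
              rw [SimpleGraph.card_neighborFinset_eq_degree,
                SimpleGraph.card_neighborFinset_eq_degree]
              exact hdmax w hwI
            have heqf := Finset.eq_of_subset_of_card_le hfs hcard
            have : v ∈ G.neighborFinset u := by
              rw [heqf, SimpleGraph.mem_neighborFinset]
              exact hwadj
            exact hadj ((SimpleGraph.mem_neighborFinset _ _ _).1 this)
      obtain ⟨j, hj, hbit0⟩ := exists_zero_bit ha0u hku hlt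
      obtain ⟨y, hyI, hyadj, hgy⟩ := hg_surj u hu j hj
      have hyv : y ≠ v := fun h => hadj (h ▸ hyadj)
      have hyadjv : G.Adj y v := hclique (by simpa using hyI) (by simpa using hv) hyv
      refine key2 u y v hyadj hyadjv ?_
      rw [hc1 u y hu hyI, hc2 y v hyI hv, hgy, hbit0]
      norm_num
  refine ⟨c, fun e _ => hcb e, ?_⟩
  intro u v
  by_cases huv : u = v
  · subst huv; exact ⟨Walk.nil, by simp⟩
  by_cases hu : u ∈ I <;> by_cases hv : v ∈ I
  · -- both in I
    obtain ⟨ha0u, hbu, ku, hku⟩ := ha_basic u hu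
    obtain ⟨ha0v, hbv, kv, hkv⟩ := ha_basic v hv
    have hav1 : a v < 1 := by
      have : (0:ℝ) < (1/2) ^ G.degree v := by positivity
      linarith
    have hau1 : a u < 1 := by
      have : (0:ℝ) < (1/2) ^ G.degree u := by positivity
      linarith
    obtain ⟨j, hj1, hj2, hbit⟩ :
        ∃ j, j < G.degree u ∧ j < G.degree v ∧ rbit j (a u) ≠ rbit j (a v) := by
      rcases ha_sep u hu v hv huv with h | h
      · exact bits_differ ha0u hav1 hku hkv h
      · obtain ⟨j, h1, h2, h3⟩ := bits_differ ha0v hau1 hkv hku h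
        exact ⟨j, h2, h1, h3.symm⟩
    obtain ⟨y, hyI, hyadj, hgy⟩ := hg_surj u hu j hj1
    have hyv : G.Adj v y := (hg_iff v hv y hyI).2 (by omega)
    refine key2 u y v hyadj hyv.symm ?_
    rw [hc1 u y hu hyI, hcomm y v, hc1 v y hv hyI, hgy]
    exact hbit
  · exact main u v hu hv
  · obtain ⟨p, hp⟩ := main v u hv hu
    refine ⟨p.reverse, ?_⟩
    rw [Walk.edges_reverse, List.map_reverse]
    exact List.nodup_reverse.2 hp
  · have hadj : G.Adj u v := hclique (by simpa using hu) (by simpa using hv) huv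
    exact key1 u v hadj
end
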